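/- arXiv:1403.7491 — 6 statements merged into one kernel-verified Lean document; each statement's English description precedes it below -/
import Mathlib

section
/- For all x, y ∈ (-1,1) with x ≠ y, the partial derivatives of the Green function G are given by ∂G/∂x (x,y) = (1/π) · (√(1-y²)/√(1-x²)) · 1/(y-x) and ∂G/∂y (x,y) = (1/π) · (√(1-x²)/√(1-y²)) · 1/(x-y). -/
noncomputable def G (x y : ℝ) : ℝ :=
  if x ∈ Set.Ioo (-1:ℝ) 1 ∧ y ∈ Set.Ioo (-1:ℝ) 1 then
    (1 / Real.pi) * Real.log ((1 - x*y + Real.sqrt ((1 - x^2) * (1 - y^2))) / |x - y|)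
  else 0

open Real in
private lemma G_symm (x y : ℝ) : G x y = G y x := by
  unfold G
  by_cases h : x ∈ Set.Ioo (-1:ℝ) 1 ∧ y ∈ Set.Ioo (-1:ℝ) 1
  · rw [if_pos h, if_pos (And.comm.mp h), abs_sub_comm, mul_comm x y, mul_comm (1 - x^2)]
  · rw [if_neg h, if_neg (fun h' => h (And.comm.mp h'))]

open Real in
private lemma key (x y : ℝ) (hx : x ∈ Set.Ioo (-1:ℝ) 1) (hy : y ∈ Set.Ioo (-1:ℝ) 1)
    (hxy : x ≠ y) :
    HasDerivAt (fun t => G t y)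
      ((1 / Real.pi) * (Real.sqrt (1 - y^2) / Real.sqrt (1 - x^2)) * (1 / (y - x))) x := by
  obtain ⟨hx1, hx2⟩ := hx
  obtain ⟨hy1, hy2⟩ := hy
  have ha : (0:ℝ) < 1 - x^2 := by nlinarith
  have hb : (0:ℝ) < 1 - y^2 := by nlinarith
  set A := Real.sqrt (1 - x^2) with hAdef
  set B := Real.sqrt (1 - y^2) with hBdef
  have hA : A^2 = 1 - x^2 := Real.sq_sqrt ha.le
  have hB : B^2 = 1 - y^2 := Real.sq_sqrt hb.le
  have hApos : 0 < A := Real.sqrt_pos.mpr ha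
  have hBpos : 0 < B := Real.sqrt_pos.mpr hb
  have hxyne : x - y ≠ 0 := sub_ne_zero.mpr hxy
  have hNpos : 0 < 1 - x*y + Real.sqrt ((1 - x^2) * (1 - y^2)) := by
    have : Real.sqrt ((1 - x^2) * (1 - y^2)) ≥ 0 := Real.sqrt_nonneg _
    nlinarith [abs_lt.mpr ⟨hx1, hx2⟩, abs_lt.mpr ⟨hy1, hy2⟩, abs_mul x y,
      abs_mul_abs_self x, neg_abs_le (x*y), abs_nonneg (x*y)]
  -- derivative of the inner sqrt argument
  have hsq : HasDerivAt (fun t : ℝ => (1 - t^2) * (1 - y^2))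
      (-(2*x) * (1 - y^2)) x := by
    have := ((hasDerivAt_pow 2 x).const_sub 1).mul_const (1 - y^2)
    simpa using this
  have hsqrt : HasDerivAt (fun t : ℝ => Real.sqrt ((1 - t^2) * (1 - y^2)))
      ((-(2*x) * (1 - y^2)) / (2 * Real.sqrt ((1 - x^2) * (1 - y^2)))) x :=
    hsq.sqrt (by positivity)
  have hN : HasDerivAt (fun t : ℝ => 1 - t*y + Real.sqrt ((1 - t^2) * (1 - y^2)))
      (-y + (-(2*x) * (1 - y^2)) / (2 * Real.sqrt ((1 - x^2) * (1 - y^2)))) x := by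
    have h1 : HasDerivAt (fun t : ℝ => 1 - t*y) (-y) x := by
      simpa using ((hasDerivAt_id x).mul_const y).const_sub 1
    exact h1.add hsqrt
  have hlogN : HasDerivAt (fun t : ℝ => Real.log (1 - t*y + Real.sqrt ((1 - t^2) * (1 - y^2))))
      ((-y + (-(2*x) * (1 - y^2)) / (2 * Real.sqrt ((1 - x^2) * (1 - y^2)))) /
        (1 - x*y + Real.sqrt ((1 - x^2) * (1 - y^2)))) x :=
    hN.log hNpos.ne'
  have hlogD : HasDerivAt (fun t : ℝ => Real.log (t - y)) (1 / (x - y)) x := by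
    have := (((hasDerivAt_id x).sub_const y).log hxyne)
    simpa using this
  have hf : HasDerivAt (fun t : ℝ => (1 / Real.pi) *
      (Real.log (1 - t*y + Real.sqrt ((1 - t^2) * (1 - y^2))) - Real.log (t - y)))
      ((1 / Real.pi) * ((-y + (-(2*x) * (1 - y^2)) / (2 * Real.sqrt ((1 - x^2) * (1 - y^2)))) /
        (1 - x*y + Real.sqrt ((1 - x^2) * (1 - y^2))) - 1 / (x - y))) x :=
    (hlogN.sub hlogD).const_mul _
  have heq : (fun t : ℝ => (1 / Real.pi) *
      (Real.log (1 - t*y + Real.sqrt ((1 - t^2) * (1 - y^2))) - Real.log (t - y)))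
      =ᶠ[nhds x] (fun t => G t y) := by
    have hopen : IsOpen (Set.Ioo (-1:ℝ) 1 ∩ {y}ᶜ) :=
      isOpen_Ioo.inter isClosed_singleton.isOpen_compl
    filter_upwards [hopen.mem_nhds ⟨⟨hx1, hx2⟩, hxy⟩] with t ht
    obtain ⟨⟨ht1, ht2⟩, htne⟩ := ht
    have htne' : t ≠ y := htne
    have hta : (0:ℝ) < 1 - t^2 := by nlinarith
    have hNt : 0 < 1 - t*y + Real.sqrt ((1 - t^2) * (1 - y^2)) := by
      have : Real.sqrt ((1 - t^2) * (1 - y^2)) ≥ 0 := Real.sqrt_nonneg _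
      nlinarith
    have habs : |t - y| ≠ 0 := abs_ne_zero.mpr (sub_ne_zero.mpr htne')
    simp only [G, if_pos (And.intro (Set.mem_Ioo.mpr ⟨ht1, ht2⟩) (Set.mem_Ioo.mpr ⟨hy1, hy2⟩))]
    rw [Real.log_div hNt.ne' habs, Real.log_abs]
  have := hf.congr_of_eventuallyEq heq.symm
  convert this using 1
  · rfl
  · rfl
  rw [Real.sqrt_mul ha.le, ← hAdef, ← hBdef]
  have hNpos' : 0 < 1 - x*y + A*B := by
    rw [Real.sqrt_mul ha.le, ← hAdef, ← hBdef] at hNpos; exact hNpos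
  have hyx : y - x ≠ 0 := sub_ne_zero.mpr (Ne.symm hxy)
  rw [show (1 - y^2) = B^2 from hB.symm]
  have hN' : 1 - x*y + A*B ≠ 0 := hNpos'.ne'
  have hN'' : 1 - y*x + B*A ≠ 0 := by rw [mul_comm y x, mul_comm B A]; exact hN'
  field_simp
  linear_combination (x-y)*A*hB - (x-y)*B*hA

theorem stmt_0 (x y : ℝ) (hx : x ∈ Set.Ioo (-1:ℝ) 1) (hy : y ∈ Set.Ioo (-1:ℝ) 1)
    (hxy : x ≠ y) :
    HasDerivAt (fun t => G t y)
      ((1 / Real.pi) * (Real.sqrt (1 - y^2) / Real.sqrt (1 - x^2)) * (1 / (y - x))) x ∧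
    HasDerivAt (fun t => G x t)
      ((1 / Real.pi) * (Real.sqrt (1 - x^2) / Real.sqrt (1 - y^2)) * (1 / (x - y))) y := by
  refine ⟨key x y hx hy hxy, ?_⟩
  have h := key y x hy hx (Ne.symm hxy)
  have hfe : (fun t => G t x) = (fun t => G x t) := funext fun t => (G_symm x t).symm
  rwa [hfe] at h
end

section
/- For all z ∈ (-1,1) and all x ∈ (-1,1), one has the identity ∫_{-z}^{z} G(x,y) dy = (z-x)·G(x,z) + (z+x)·G(x,-z) + (2/π)·√(1-x²)·arcsin(z). -/
open Real Set MeasureTheory intervalIntegral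

noncomputable def Fx (x y : ℝ) : ℝ :=
  (y - x) * ((1 / Real.pi) *
    (Real.log (1 - x*y + Real.sqrt (1 - x^2) * Real.sqrt (1 - y^2)) - Real.log (y - x)))
    + (1 / Real.pi) * Real.sqrt (1 - x^2) * Real.arcsin y

lemma Npos {x y : ℝ} (hx : x ∈ Set.Ioo (-1:ℝ) 1) (hy : y ∈ Set.Ioo (-1:ℝ) 1) :
    0 < 1 - x*y + Real.sqrt (1 - x^2) * Real.sqrt (1 - y^2) := by
  have h1 : 0 ≤ Real.sqrt (1 - x^2) * Real.sqrt (1 - y^2) := by positivity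
  obtain ⟨hx1, hx2⟩ := hx; obtain ⟨hy1, hy2⟩ := hy
  nlinarith

lemma Geq {x y : ℝ} (hx : x ∈ Set.Ioo (-1:ℝ) 1) (hy : y ∈ Set.Ioo (-1:ℝ) 1) (hne : y ≠ x) :
    G x y = (1 / Real.pi) *
      (Real.log (1 - x*y + Real.sqrt (1 - x^2) * Real.sqrt (1 - y^2)) - Real.log (y - x)) := by
  rw [G, if_pos ⟨hx, hy⟩]
  have h2 : Real.sqrt ((1 - x^2) * (1 - y^2)) = Real.sqrt (1 - x^2) * Real.sqrt (1 - y^2) :=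
    Real.sqrt_mul (by nlinarith [hx.1, hx.2]) _
  rw [h2, Real.log_div (Npos hx hy).ne'
      (abs_ne_zero.mpr (sub_ne_zero.mpr (fun h => hne h.symm))),
    abs_sub_comm, Real.log_abs]

lemma FxG {x y : ℝ} (hx : x ∈ Set.Ioo (-1:ℝ) 1) (hy : y ∈ Set.Ioo (-1:ℝ) 1) :
    Fx x y = (y - x) * G x y + (1 / Real.pi) * Real.sqrt (1 - x^2) * Real.arcsin y := by
  by_cases hne : y = x
  · subst hne; simp [Fx]
  · rw [Fx, Geq hx hy hne]

lemma Fx_deriv {x y : ℝ} (hx : x ∈ Set.Ioo (-1:ℝ) 1) (hy : y ∈ Set.Ioo (-1:ℝ) 1)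
    (hne : y ≠ x) : HasDerivAt (Fx x) (G x y) y := by
  have hpi : Real.pi ≠ 0 := Real.pi_ne_zero
  have hb2 : (0:ℝ) < 1 - y^2 := by nlinarith [hy.1, hy.2]
  have hb : 0 < Real.sqrt (1 - y^2) := Real.sqrt_pos.mpr hb2
  have ha2 : Real.sqrt (1 - x^2) ^ 2 = 1 - x^2 :=
    Real.sq_sqrt (by nlinarith [hx.1, hx.2])
  have hbsq : Real.sqrt (1 - y^2) ^ 2 = 1 - y^2 := Real.sq_sqrt hb2.le
  have hN := Npos hx hy
  set a := Real.sqrt (1 - x^2) with hadef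
  set b := Real.sqrt (1 - y^2) with hbdef
  have hs : HasDerivAt (fun y : ℝ => Real.sqrt (1 - y^2)) (-y / b) y := by
    have h1 : HasDerivAt (fun y : ℝ => 1 - y^2) (-(2*y)) y := by
      simpa using (hasDerivAt_pow 2 y).const_sub 1
    have := (Real.hasDerivAt_sqrt hb2.ne').comp y h1
    refine this.congr_deriv ?_
    symm
    rw [← hbdef]; field_simp
  have hNd : HasDerivAt (fun y : ℝ => 1 - x*y + a * Real.sqrt (1 - y^2))
      (-x + a * (-y / b)) y := by
    have h1 : HasDerivAt (fun y : ℝ => 1 - x*y) (-x) y := by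
      simpa using ((hasDerivAt_id y).const_mul x).const_sub 1
    exact h1.add (hs.const_mul a)
  have hlogN : HasDerivAt (fun y : ℝ => Real.log (1 - x*y + a * Real.sqrt (1 - y^2)))
      ((-x + a * (-y / b)) / (1 - x*y + a * b)) y := by
    exact hNd.log hN.ne'
  have hlogd : HasDerivAt (fun y : ℝ => Real.log (y - x)) (1 / (y - x)) y := by
    have h1 : HasDerivAt (fun y : ℝ => y - x) 1 y := (hasDerivAt_id y).sub_const x
    simpa using h1.log (sub_ne_zero.mpr hne)
  have harc : HasDerivAt Real.arcsin (1 / b) y :=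
    Real.hasDerivAt_arcsin (by intro h; rw [h] at hy; exact absurd hy.1 (lt_irrefl _))
      (by intro h; rw [h] at hy; exact absurd hy.2 (lt_irrefl _))
  have H := (((hasDerivAt_id y).sub_const x).mul ((hlogN.sub hlogd).const_mul (1/Real.pi))).add
      ((harc.const_mul ((1/Real.pi) * a)))
  have hFx : Fx x = fun y : ℝ => (y - x) * ((1/Real.pi) *
      (Real.log (1 - x*y + a * Real.sqrt (1 - y^2)) - Real.log (y - x)))
      + (1/Real.pi) * a * Real.arcsin y := rfl
  rw [hFx]
  refine H.congr_deriv ?_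
  symm
  rw [Geq hx hy hne, ← hadef, ← hbdef]
  have hyx : y - x ≠ 0 := sub_ne_zero.mpr hne
  have key : (y - x) * ((-x + a * (-y / b)) / (1 - x*y + a*b) - 1/(y-x)) + a * (1/b) = 0 := by
    have hN' : 1 - y*x + a*b ≠ 0 := by linarith
    field_simp
    linear_combination b * ha2 - a * hbsq
  simp only [id, Pi.sub_apply]
  linear_combination (-(1/Real.pi)) * key

lemma log_int01 : IntervalIntegrable Real.log volume 0 1 := by
  have h : IntervalIntegrable (fun t : ℝ => -Real.log t) volume 0 1 := by
    apply intervalIntegrable_deriv_of_nonneg (g := fun t : ℝ => t - t * Real.log t)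
    · exact (continuous_id.sub Real.continuous_mul_log).continuousOn
    · intro t ht
      simp only [min_self, min_eq_left, max_eq_right, zero_le_one] at ht
      have ht0 : (0:ℝ) < t := ht.1
      have h1 : HasDerivAt (fun t : ℝ => t - t * Real.log t)
          (1 - (1 * Real.log t + t * t⁻¹)) t :=
        (hasDerivAt_id t).sub ((hasDerivAt_id t).mul (Real.hasDerivAt_log ht0.ne'))
      convert h1 using 1
      field_simp
      ring
    · intro t ht
      simp only [min_eq_left, max_eq_right, zero_le_one] at ht
      simp only [neg_nonneg]
      exact Real.log_nonpos ht.1.le ht.2.le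
  have h2 := h.neg
  convert h2 using 1
  funext t; simp

lemma log_int (a b : ℝ) : IntervalIntegrable Real.log volume a b := by
  have h : ∀ c : ℝ, 0 ≤ c → IntervalIntegrable Real.log volume 0 c := by
    intro c hc
    rcases le_total c 1 with h1 | h1
    · refine log_int01.mono_set (uIcc_subset_uIcc ?_ ?_)
      · simp [Set.mem_uIcc]
      · simp only [Set.mem_uIcc]
        left; exact ⟨hc, h1⟩
    · refine log_int01.trans (intervalIntegrable_log ?_)
      simp only [Set.mem_uIcc]
      push_neg
      constructor <;> intro h' <;> [linarith; linarith]
  have h' : ∀ c : ℝ, IntervalIntegrable Real.log volume 0 c := by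
    intro c
    rcases le_total 0 c with hc | hc
    · exact h c hc
    · have := (IntervalIntegrable.iff_comp_neg).mp (h (-c) (by linarith))
      simp only [neg_zero, neg_neg] at this
      simpa [Real.log_neg_eq_log] using this
  exact (h' a).symm.trans (h' b)

lemma log_shift_int (x a b : ℝ) : IntervalIntegrable (fun y => Real.log (y - x)) volume a b := by
  have := (log_int (a - x) (b - x)).comp_sub_right x
  simpa using this

lemma Fx_cont {x : ℝ} (hx : x ∈ Set.Ioo (-1:ℝ) 1) :
    ContinuousOn (Fx x) (Set.Ioo (-1:ℝ) 1) := by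
  have hrw : Fx x = fun y : ℝ => (1/Real.pi) *
      ((y - x) * Real.log (1 - x*y + Real.sqrt (1-x^2) * Real.sqrt (1-y^2)))
      - (1/Real.pi) * ((y - x) * Real.log (y - x))
      + (1/Real.pi) * Real.sqrt (1-x^2) * Real.arcsin y := by
    funext y; rw [Fx]; ring
  rw [hrw]
  intro y hy
  refine ContinuousAt.continuousWithinAt ?_
  have hNc : ContinuousAt (fun y : ℝ =>
      1 - x*y + Real.sqrt (1-x^2) * Real.sqrt (1-y^2)) y := by
    apply Continuous.continuousAt
    exact (continuous_const.sub (continuous_const.mul continuous_id)).add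
      (continuous_const.mul (Real.continuous_sqrt.comp (continuous_const.sub (continuous_pow 2))))
  have hlogN : ContinuousAt (fun y : ℝ =>
      Real.log (1 - x*y + Real.sqrt (1-x^2) * Real.sqrt (1-y^2))) y :=
    hNc.log (Npos hx hy).ne'
  have hml : ContinuousAt (fun y : ℝ => (y - x) * Real.log (y - x)) y :=
    (Real.continuous_mul_log.comp (continuous_id.sub continuous_const)).continuousAt
  exact ((continuousAt_const.mul ((continuousAt_id.sub continuousAt_const).mul hlogN)).sub
    (continuousAt_const.mul hml)).add
    ((continuousAt_const.mul continuousAt_const).mul Real.continuous_arcsin.continuousAt)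

lemma Gcont_int {x a b : ℝ} (hx : x ∈ Set.Ioo (-1:ℝ) 1)
    (hab : Set.uIcc a b ⊆ Set.Ioo (-1:ℝ) 1) :
    IntervalIntegrable (G x) volume a b := by
  have hcont : ContinuousOn (fun y : ℝ =>
      Real.log (1 - x*y + Real.sqrt (1 - x^2) * Real.sqrt (1 - y^2))) (Set.uIcc a b) := by
    apply ContinuousOn.log
    · exact ((continuous_const.sub (continuous_const.mul continuous_id)).add
        (continuous_const.mul (Real.continuous_sqrt.comp
          (continuous_const.sub (continuous_pow 2))))).continuousOn
    · exact fun y hy => (Npos hx (hab hy)).ne'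
  have h1 : IntervalIntegrable (fun y : ℝ =>
      (1/Real.pi) * (Real.log (1 - x*y + Real.sqrt (1 - x^2) * Real.sqrt (1 - y^2))
        - Real.log (y - x))) volume a b :=
    ((hcont.intervalIntegrable).sub (log_shift_int x a b)).const_mul (1/Real.pi)
  have hne : ∀ᵐ (y:ℝ) ∂volume, y ≠ x := by
    simp only [ae_iff, not_not]
    have : {y : ℝ | y = x} = {x} := by ext y; simp
    rw [this]
    exact Real.volume_singleton
  rw [intervalIntegrable_iff] at h1 ⊢
  apply h1.congr
  filter_upwards [ae_restrict_mem measurableSet_uIoc, ae_restrict_of_ae hne] with y hy hyx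
  exact (Geq hx (hab (Set.uIoc_subset_uIcc hy)) hyx).symm

lemma ftc_aux {x a b : ℝ} (hx : x ∈ Set.Ioo (-1:ℝ) 1) (ha : a ∈ Set.Ioo (-1:ℝ) 1)
    (hb : b ∈ Set.Ioo (-1:ℝ) 1) (hab : a ≤ b) (hnot : x ∉ Set.Ioo a b) :
    ∫ y in a..b, G x y = Fx x b - Fx x a := by
  have hsub : Set.Icc a b ⊆ Set.Ioo (-1:ℝ) 1 :=
    fun y hy => ⟨lt_of_lt_of_le ha.1 hy.1, lt_of_le_of_lt hy.2 hb.2⟩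
  apply intervalIntegral.integral_eq_sub_of_hasDeriv_right_of_le hab
  · exact (Fx_cont hx).mono hsub
  · intro y hy
    exact (Fx_deriv hx (hsub (Set.Ioo_subset_Icc_self hy))
      (fun h => hnot (h ▸ hy))).hasDerivWithinAt
  · exact Gcont_int hx (by rw [Set.uIcc_of_le hab]; exact hsub)

lemma ftc {x a b : ℝ} (hx : x ∈ Set.Ioo (-1:ℝ) 1) (ha : a ∈ Set.Ioo (-1:ℝ) 1)
    (hb : b ∈ Set.Ioo (-1:ℝ) 1) (hab : a ≤ b) :
    ∫ y in a..b, G x y = Fx x b - Fx x a := by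
  by_cases hmem : x ∈ Set.Ioo a b
  · have s1 : Set.uIcc a x ⊆ Set.Ioo (-1:ℝ) 1 := by
      rw [Set.uIcc_of_le hmem.1.le]
      exact fun y hy => ⟨lt_of_lt_of_le ha.1 hy.1, lt_of_le_of_lt hy.2 hx.2⟩
    have s2 : Set.uIcc x b ⊆ Set.Ioo (-1:ℝ) 1 := by
      rw [Set.uIcc_of_le hmem.2.le]
      exact fun y hy => ⟨lt_of_lt_of_le hx.1 hy.1, lt_of_le_of_lt hy.2 hb.2⟩
    have h1 : ∫ y in a..x, G x y = Fx x x - Fx x a :=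
      ftc_aux hx ha hx hmem.1.le (fun h => absurd h.2 (lt_irrefl x))
    have h2 : ∫ y in x..b, G x y = Fx x b - Fx x x :=
      ftc_aux hx hx hb hmem.2.le (fun h => absurd h.1 (lt_irrefl x))
    rw [← intervalIntegral.integral_add_adjacent_intervals (Gcont_int hx s1) (Gcont_int hx s2),
      h1, h2]
    ring
  · exact ftc_aux hx ha hb hab hmem

theorem stmt_1 (x z : ℝ) (hx : x ∈ Set.Ioo (-1:ℝ) 1) (hz : z ∈ Set.Ioo (-1:ℝ) 1) :
    ∫ y in -z..z, G x y =
      (z - x) * G x z + (z + x) * G x (-z)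
        + (2 / Real.pi) * Real.sqrt (1 - x^2) * Real.arcsin z := by
  have hz' : -z ∈ Set.Ioo (-1:ℝ) 1 := ⟨by linarith [hz.2], by linarith [hz.1]⟩
  rcases le_total (-z) z with h | h
  · rw [ftc hx hz' hz h, FxG hx hz, FxG hx hz']
    simp only [Real.arcsin_neg]
    ring
  · rw [intervalIntegral.integral_symm z (-z), ftc hx hz hz' h, FxG hx hz, FxG hx hz']
    simp only [Real.arcsin_neg]
    ring
end

section
/- Let b > -3/2 and let f : (-1,1) → ℝ be a measurable function satisfying |f(x)| ≤ C·(1-x²)^b for all x ∈ (-1,1) and some constant C > 0. Then for every x ∈ (-1,1) the integral u(x) = ∫_{-1}^{1} G(x,y)·f(y) dy is absolutely convergent, and the function u is continuous on (-1,1). -/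
open Set MeasureTheory Real Filter

lemma N_pos {x y : ℝ} (hx : x ∈ Set.Ioo (-1:ℝ) 1) (hy : y ∈ Set.Ioo (-1:ℝ) 1) :
    0 < 1 - x*y + Real.sqrt ((1 - x^2) * (1 - y^2)) := by
  obtain ⟨hx1, hx2⟩ := hx; obtain ⟨hy1, hy2⟩ := hy
  have h1 : x*y < 1 := by nlinarith [sq_nonneg (x - y), sq_nonneg (x + y)]
  have h2 := Real.sqrt_nonneg ((1 - x^2) * (1 - y^2))
  linarith

lemma abs_le_N {x y : ℝ} (hx : x ∈ Set.Ioo (-1:ℝ) 1) (hy : y ∈ Set.Ioo (-1:ℝ) 1) :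
    |x - y| ≤ 1 - x*y + Real.sqrt ((1 - x^2) * (1 - y^2)) := by
  obtain ⟨hx1, hx2⟩ := hx; obtain ⟨hy1, hy2⟩ := hy
  have h2 := Real.sqrt_nonneg ((1 - x^2) * (1 - y^2))
  have h3 : |x - y| ≤ 1 - x*y := by
    rw [abs_le]
    constructor <;> nlinarith
  linarith

lemma N_le_three {x y : ℝ} (hx : x ∈ Set.Ioo (-1:ℝ) 1) (hy : y ∈ Set.Ioo (-1:ℝ) 1) :
    1 - x*y + Real.sqrt ((1 - x^2) * (1 - y^2)) ≤ 3 := by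
  obtain ⟨hx1, hx2⟩ := hx; obtain ⟨hy1, hy2⟩ := hy
  have h1 : Real.sqrt ((1 - x^2) * (1 - y^2)) ≤ 1 := by
    rw [Real.sqrt_le_one]
    have hx3 : x^2 ≤ 1 := by nlinarith
    have hy3 : y^2 ≤ 1 := by nlinarith
    exact mul_le_one₀ (by nlinarith) (by nlinarith) (by nlinarith)
  nlinarith

lemma G_eq {x y : ℝ} (hx : x ∈ Set.Ioo (-1:ℝ) 1) (hy : y ∈ Set.Ioo (-1:ℝ) 1) :
    G x y = (1 / Real.pi) *
      Real.log ((1 - x*y + Real.sqrt ((1 - x^2) * (1 - y^2))) / |x - y|) :=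
  if_pos ⟨hx, hy⟩

lemma G_self (x y : ℝ) (h : x = y) : G x y = 0 := by
  subst h
  unfold G
  split
  · simp
  · rfl

lemma G_nonneg (x y : ℝ) : 0 ≤ G x y := by
  unfold G
  split
  · rename_i h
    obtain ⟨hx, hy⟩ := h
    rcases eq_or_ne x y with rfl | hxy
    · simp
    · have hd : 0 < |x - y| := abs_pos.2 (sub_ne_zero.2 hxy)
      have h1 : (1:ℝ) ≤ (1 - x*y + Real.sqrt ((1 - x^2) * (1 - y^2))) / |x - y| :=
        (one_le_div hd).2 (abs_le_N hx hy)
      have := Real.log_nonneg h1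
      positivity
  · exact le_refl 0

lemma G_le_rpow {x y : ℝ} (hx : x ∈ Set.Ioo (-1:ℝ) 1) (hy : y ∈ Set.Ioo (-1:ℝ) 1) :
    G x y ≤ (1 / Real.pi) * (Real.log 3 + 2 * |x - y| ^ (-(1/2) : ℝ)) := by
  have hlog3 : (0:ℝ) ≤ Real.log 3 := Real.log_nonneg (by norm_num)
  rcases eq_or_ne x y with rfl | hxy
  · rw [G_self x x rfl]
    have : (0:ℝ) ≤ |x - x| ^ (-(1/2) : ℝ) := Real.rpow_nonneg (abs_nonneg _) _
    positivity
  · have hd : 0 < |x - y| := abs_pos.2 (sub_ne_zero.2 hxy)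
    have hN := N_pos hx hy
    rw [G_eq hx hy, Real.log_div (ne_of_gt hN) (ne_of_gt hd)]
    have h1 : Real.log (1 - x*y + Real.sqrt ((1 - x^2) * (1 - y^2))) ≤ Real.log 3 :=
      Real.log_le_log hN (N_le_three hx hy)
    have h2 : -Real.log |x - y| ≤ 2 * |x - y| ^ (-(1/2) : ℝ) := by
      have hp : 0 < |x - y| ^ (-(1/2) : ℝ) := Real.rpow_pos_of_pos hd _
      have h3 : Real.log (|x - y| ^ (-(1/2) : ℝ)) ≤ |x - y| ^ (-(1/2) : ℝ) - 1 :=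
        Real.log_le_sub_one_of_pos hp
      rw [Real.log_rpow hd] at h3
      linarith
    have hπ : (0:ℝ) ≤ 1 / Real.pi := by positivity
    apply mul_le_mul_of_nonneg_left _ hπ
    linarith

lemma G_le_sqrt {x y : ℝ} (hx : x ∈ Set.Ioo (-1:ℝ) 1) (hy : y ∈ Set.Ioo (-1:ℝ) 1) :
    G x y ≤ (3 / Real.pi) * Real.sqrt (1 - y^2) / |x - y| := by
  obtain ⟨hx1, hx2⟩ := hx; obtain ⟨hy1, hy2⟩ := hy
  have hx' : x ∈ Set.Ioo (-1:ℝ) 1 := ⟨hx1, hx2⟩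
  have hy' : y ∈ Set.Ioo (-1:ℝ) 1 := ⟨hy1, hy2⟩
  have hsq : (0:ℝ) ≤ Real.sqrt (1 - y^2) := Real.sqrt_nonneg _
  rcases eq_or_ne x y with rfl | hxy
  · rw [G_self x x rfl]
    simp
  · have hd : 0 < |x - y| := abs_pos.2 (sub_ne_zero.2 hxy)
    have hN := N_pos hx' hy'
    have key : 1 - x*y + Real.sqrt ((1 - x^2) * (1 - y^2)) - |x - y|
        ≤ 3 * Real.sqrt (1 - y^2) := by
      have e1 : Real.sqrt ((1 - x^2) * (1 - y^2)) ≤ Real.sqrt (1 - y^2) := by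
        rw [show (1 - x^2) * (1 - y^2) = (1 - y^2) * (1 - x^2) by ring,
            Real.sqrt_mul (by nlinarith)]
        have h1 : Real.sqrt (1 - x^2) ≤ 1 := by
          rw [Real.sqrt_le_one]; nlinarith
        nlinarith [Real.sqrt_nonneg (1 - x^2)]
      have e2 : 1 - y^2 ≤ Real.sqrt (1 - y^2) := by
        have h0 : (0:ℝ) ≤ 1 - y^2 := by nlinarith
        nlinarith [Real.sq_sqrt h0, Real.sqrt_nonneg (1 - y^2), sq_nonneg (Real.sqrt (1 - y^2) - 1)]
      have e3 : 1 - x*y - |x - y| ≤ 2 * (1 - y^2) := by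
        rcases le_total x y with h | h
        · rw [abs_of_nonpos (by linarith)]
          nlinarith
        · rw [abs_of_nonneg (by linarith)]
          nlinarith
      linarith
    rw [G_eq hx' hy']
    have h1 : Real.log ((1 - x*y + Real.sqrt ((1 - x^2) * (1 - y^2))) / |x - y|)
        ≤ 3 * Real.sqrt (1 - y^2) / |x - y| := by
      have h2 := Real.log_le_sub_one_of_pos (div_pos hN hd)
      have h3 : (1 - x*y + Real.sqrt ((1 - x^2) * (1 - y^2))) / |x - y| - 1
          = (1 - x*y + Real.sqrt ((1 - x^2) * (1 - y^2)) - |x - y|) / |x - y| := by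
        field_simp
      rw [h3] at h2
      exact h2.trans ((div_le_div_iff_of_pos_right hd).2 key)
    have hπ : (0:ℝ) < Real.pi := Real.pi_pos
    rw [show (3 / Real.pi) * Real.sqrt (1 - y^2) / |x - y|
        = (1 / Real.pi) * (3 * Real.sqrt (1 - y^2) / |x - y|) by field_simp]
    apply mul_le_mul_of_nonneg_left h1 (by positivity)

lemma measurable_G (x : ℝ) : Measurable (fun y => G x y) := by
  unfold G
  by_cases hx : x ∈ Set.Ioo (-1:ℝ) 1
  · simp only [hx, true_and]
    have hs : MeasurableSet {y : ℝ | y ∈ Set.Ioo (-1:ℝ) 1} := measurableSet_Ioo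
    apply Measurable.ite hs _ measurable_const
    apply Measurable.mul measurable_const
    apply Real.measurable_log.comp
    apply Measurable.div
    · apply Measurable.add
      · fun_prop
      · exact (Real.continuous_sqrt.measurable).comp (by fun_prop)
    · fun_prop
  · simp only [hx, false_and, if_false]
    exact measurable_const

lemma base_rpow (a b : ℝ) : IntegrableOn (fun t : ℝ => t ^ (-(1/2) : ℝ)) (Ioo a b) := by
  rcases le_total a b with h | h
  · exact (intervalIntegrable_iff_integrableOn_Ioo_of_le h).1
      (intervalIntegral.intervalIntegrable_rpow' (by norm_num))
  · rw [Ioo_eq_empty_of_le h]; exact integrableOn_empty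

lemma integrableOn_rpow_abs (x c d : ℝ) :
    IntegrableOn (fun y => |x - y| ^ (-(1/2) : ℝ)) (Ioo c d) := by
  set R := |c - x| + |d - x| + 1 with hR
  have hRpos : 0 < R := by positivity
  have hsub : Ioo c d ⊆ Ioo (x - R) (x + R) := by
    intro y hy
    obtain ⟨h1, h2⟩ := hy
    constructor
    · have := abs_nonneg (d - x)
      have := neg_abs_le (c - x)
      simp only [hR]; linarith
    · have := abs_nonneg (c - x)
      have := le_abs_self (d - x)
      simp only [hR]; linarith
  apply IntegrableOn.mono_set _ hsub
  have hbase : IntervalIntegrable (fun t : ℝ => t ^ (-(1/2) : ℝ)) volume 0 R :=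
    intervalIntegral.intervalIntegrable_rpow' (by norm_num)
  have hleft : IntegrableOn (fun y => |x - y| ^ (-(1/2) : ℝ)) (Ioo (x - R) x) := by
    have h1 : IntervalIntegrable (fun y => (x - y) ^ (-(1/2) : ℝ)) volume (x - 0) (x - R) :=
      hbase.comp_sub_left x
    have h2 : IntegrableOn (fun y => (x - y) ^ (-(1/2) : ℝ)) (Ioo (x - R) x) := by
      have := (intervalIntegrable_iff_integrableOn_Ioo_of_le (by linarith)).1 h1.symm
      simpa using this
    apply h2.congr_fun _ measurableSet_Ioo
    intro y hy
    show (x - y) ^ (-(1/2):ℝ) = |x - y| ^ (-(1/2):ℝ)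
    rw [abs_of_pos (by linarith [hy.2] : (0:ℝ) < x - y)]
  have hright : IntegrableOn (fun y => |x - y| ^ (-(1/2) : ℝ)) (Ioo x (x + R)) := by
    have h1 : IntervalIntegrable (fun y => (y - x) ^ (-(1/2) : ℝ)) volume (0 + x) (R + x) :=
      hbase.comp_sub_right x
    have h2 : IntegrableOn (fun y => (y - x) ^ (-(1/2) : ℝ)) (Ioo x (x + R)) := by
      have := (intervalIntegrable_iff_integrableOn_Ioo_of_le (by linarith)).1 h1
      simpa [add_comm] using this
    apply h2.congr_fun _ measurableSet_Ioo
    intro y hy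
    show (y - x) ^ (-(1/2):ℝ) = |x - y| ^ (-(1/2):ℝ)
    rw [abs_sub_comm, abs_of_pos (by linarith [hy.1] : (0:ℝ) < y - x)]
  have hmid : IntegrableOn (fun y => |x - y| ^ (-(1/2) : ℝ)) {x} := by
    apply Integrable.mono_measure (integrable_zero_measure (f := fun y => |x - y| ^ (-(1/2):ℝ)))
    simp [Measure.restrict_singleton]
  have hcover : Ioo (x - R) (x + R) ⊆ Ioo (x - R) x ∪ ({x} ∪ Ioo x (x + R)) := by
    intro y hy
    rcases lt_trichotomy y x with h | h | h
    · exact Or.inl ⟨hy.1, h⟩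
    · exact Or.inr (Or.inl (by simp [h]))
    · exact Or.inr (Or.inr ⟨h, hy.2⟩)
  exact (hleft.union (hmid.union hright)).mono_set hcover

lemma integrableOn_one_sub_sq {q : ℝ} (hq : -1 < q) :
    IntegrableOn (fun y : ℝ => (1 - y^2) ^ q) (Ioo (-1:ℝ) 1) := by
  have hbase : IntervalIntegrable (fun t : ℝ => t ^ q) volume 0 2 :=
    intervalIntegral.intervalIntegrable_rpow' hq
  have hone : IntegrableOn (fun y : ℝ => (1 - y) ^ q) (Ioo (-1:ℝ) 1) := by
    have h1 : IntervalIntegrable (fun y => (1 - y) ^ q) volume (1 - 0) (1 - 2) :=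
      hbase.comp_sub_left 1
    have := (intervalIntegrable_iff_integrableOn_Ioo_of_le (by norm_num)).1 h1.symm
    simpa [show (1:ℝ)-2 = -1 by norm_num, show (1:ℝ)-0 = 1 by norm_num] using this
  have htwo : IntegrableOn (fun y : ℝ => (1 + y) ^ q) (Ioo (-1:ℝ) 1) := by
    have h1 : IntervalIntegrable (fun y => (1 + y) ^ q) volume (0 - 1) (2 - 1) :=
      hbase.comp_add_left 1
    have := (intervalIntegrable_iff_integrableOn_Ioo_of_le (by norm_num)).1 h1
    simpa [show (0:ℝ)-1 = -1 by norm_num, show (2:ℝ)-1 = 1 by norm_num] using this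
  set K : ℝ := 2 ^ q + 1 with hK
  have hKpos : 0 < K := by positivity
  have hfact : ∀ y ∈ Ioo (-1:ℝ) 1, (1 - y^2) ^ q = (1 - y) ^ q * (1 + y) ^ q := by
    intro y hy
    rw [show (1 : ℝ) - y^2 = (1 - y) * (1 + y) by ring,
      Real.mul_rpow (by linarith [hy.2]) (by linarith [hy.1])]
  have hbound1 : ∀ z : ℝ, 1 ≤ z → z ≤ 2 → z ^ q ≤ K := by
    intro z h1 h2
    rcases le_or_gt 0 q with hq0 | hq0
    · have : z ^ q ≤ 2 ^ q := Real.rpow_le_rpow (by linarith) h2 hq0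
      have : (0:ℝ) < 2 ^ q := by positivity
      nlinarith [Real.rpow_le_rpow (by linarith : (0:ℝ) ≤ z) h2 hq0]
    · have h3 : z ^ q ≤ 1 ^ q := Real.rpow_le_rpow_of_nonpos (by norm_num) h1 hq0.le
      rw [Real.one_rpow] at h3
      have : (0:ℝ) < 2 ^ q := by positivity
      linarith
  have hmeas : AEStronglyMeasurable (fun y : ℝ => (1 - y^2) ^ q)
      (volume.restrict (Ioo (-1:ℝ) 1)) := by
    exact (by measurability : Measurable (fun y : ℝ => (1 - y^2) ^ q)).aestronglyMeasurable
  have hIoo1 : IntegrableOn (fun y : ℝ => (1 - y^2) ^ q) (Ioo (0:ℝ) 1) := by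
    apply Integrable.mono' ((hone.mono_set (Ioo_subset_Ioo (by norm_num) le_rfl)).const_mul K)
      (hmeas.mono_measure (Measure.restrict_mono (Ioo_subset_Ioo (by norm_num) le_rfl) le_rfl))
    filter_upwards [ae_restrict_mem measurableSet_Ioo] with y hy
    have hy' : y ∈ Ioo (-1:ℝ) 1 := ⟨by linarith [hy.1], hy.2⟩
    rw [Real.norm_eq_abs, abs_of_nonneg (Real.rpow_nonneg (by nlinarith [hy.1, hy.2]) q),
      hfact y hy']
    have h2 : (1 + y) ^ q ≤ K := hbound1 (1+y) (by linarith [hy.1]) (by linarith [hy.2])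
    have h3 : (0:ℝ) ≤ (1 - y) ^ q := Real.rpow_nonneg (by linarith [hy.2]) q
    calc (1 - y) ^ q * (1 + y) ^ q ≤ (1 - y) ^ q * K := by
          exact mul_le_mul_of_nonneg_left h2 h3
      _ = K * (1 - y) ^ q := by ring
  have hIoo2 : IntegrableOn (fun y : ℝ => (1 - y^2) ^ q) (Ioc (-1:ℝ) 0) := by
    rw [integrableOn_Ioc_iff_integrableOn_Ioo]
    apply Integrable.mono' ((htwo.mono_set (Ioo_subset_Ioo le_rfl (by norm_num))).const_mul K)
      (hmeas.mono_measure (Measure.restrict_mono (Ioo_subset_Ioo le_rfl (by norm_num)) le_rfl))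
    filter_upwards [ae_restrict_mem measurableSet_Ioo] with y hy
    have hy' : y ∈ Ioo (-1:ℝ) 1 := ⟨hy.1, by linarith [hy.2]⟩
    rw [Real.norm_eq_abs, abs_of_nonneg (Real.rpow_nonneg (by nlinarith [hy.1, hy.2]) q),
      hfact y hy']
    have h2 : (1 - y) ^ q ≤ K := hbound1 (1-y) (by linarith [hy.2]) (by linarith [hy.1])
    have h3 : (0:ℝ) ≤ (1 + y) ^ q := Real.rpow_nonneg (by linarith [hy.1]) q
    calc (1 - y) ^ q * (1 + y) ^ q ≤ K * (1 + y) ^ q := by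
          exact mul_le_mul_of_nonneg_right h2 h3
      _ = K * (1 + y) ^ q := rfl
  have hcover : Ioo (-1:ℝ) 1 ⊆ Ioc (-1:ℝ) 0 ∪ Ioo (0:ℝ) 1 := by
    intro y hy
    rcases le_or_gt y 0 with h | h
    · exact Or.inl ⟨hy.1, h⟩
    · exact Or.inr ⟨h, hy.2⟩
  exact (hIoo2.union hIoo1).mono_set hcover

lemma M_bound {b m : ℝ} (hm : 0 < m) {y : ℝ} (hy : y ∈ Set.Ioo (-1:ℝ) 1)
    (hmy : m ≤ 1 - y^2) : (1 - y^2) ^ b ≤ m ^ b + 1 := by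
  have h1 : (0:ℝ) < 1 - y^2 := lt_of_lt_of_le hm hmy
  have h2 : 1 - y^2 ≤ 1 := by nlinarith [hy.1, hy.2]
  rcases le_or_gt 0 b with hb0 | hb0
  · have : (1 - y^2) ^ b ≤ 1 ^ b := Real.rpow_le_rpow (le_of_lt h1) h2 hb0
    rw [Real.one_rpow] at this
    have : (0:ℝ) ≤ m ^ b := Real.rpow_nonneg hm.le b
    linarith [Real.rpow_le_rpow (le_of_lt h1) h2 hb0, Real.one_rpow b]
  · have h3 : (1 - y^2) ^ b ≤ m ^ b := Real.rpow_le_rpow_of_nonpos hm hmy hb0.le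
    linarith

lemma integrable_Gf {b : ℝ} (hb : b > -(3/2)) {f : ℝ → ℝ} (hf : Measurable f)
    {C : ℝ} (hC : 0 < C)
    (hbound : ∀ x ∈ Set.Ioo (-1:ℝ) 1, |f x| ≤ C * (1 - x^2) ^ b) :
    ∀ x ∈ Set.Ioo (-1:ℝ) 1,
      MeasureTheory.IntegrableOn (fun y => G x y * f y) (Set.Ioo (-1:ℝ) 1) := by
  intro x hx
  have hπ := Real.pi_pos
  have hxabs : |x| < 1 := abs_lt.2 ⟨hx.1, hx.2⟩
  set δ : ℝ := (1 - |x|) / 2 with hδdef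
  have hδ : 0 < δ := by simp only [hδdef]; linarith
  set m : ℝ := 1 - ((1 + |x|) / 2)^2 with hmdef
  have hm : 0 < m := by
    have : (1 + |x|) / 2 < 1 := by linarith
    have h0 : (0:ℝ) ≤ (1 + |x|) / 2 := by positivity
    simp only [hmdef]; nlinarith
  set M : ℝ := m ^ b + 1 with hMdef
  have hM : 0 < M := by
    have : (0:ℝ) < m ^ b := Real.rpow_pos_of_pos hm b
    simp only [hMdef]; linarith
  have hMy : ∀ y ∈ Set.Ioo (-1:ℝ) 1, |y - x| < δ → (1 - y^2) ^ b ≤ M := by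
    intro y hy hyx
    apply M_bound hm hy
    have h1 : |y| ≤ (1 + |x|) / 2 := by
      calc |y| = |y - x + x| := by ring_nf
        _ ≤ |y - x| + |x| := abs_add_le _ _
        _ ≤ δ + |x| := by linarith
        _ = (1 + |x|) / 2 := by simp only [hδdef]; ring
    have h2 : y^2 ≤ ((1 + |x|) / 2)^2 := by
      rw [← sq_abs y]
      apply sq_le_sq' <;> nlinarith [abs_nonneg y]
    simp only [hmdef]; linarith
  have hmeas : AEStronglyMeasurable (fun y => G x y * f y)
      (volume.restrict (Set.Ioo (-1:ℝ) 1)) :=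
    ((measurable_G x).mul hf).aestronglyMeasurable
  -- near part
  have hnear : MeasureTheory.IntegrableOn (fun y => G x y * f y)
      (Set.Ioo (-1:ℝ) 1 ∩ Set.Ioo (x - δ) (x + δ)) := by
    set g₁ : ℝ → ℝ := fun y => C * M / Real.pi * Real.log 3
        + 2 * C * M / Real.pi * |x - y| ^ (-(1/2) : ℝ) with hg₁
    have hint : MeasureTheory.IntegrableOn g₁
        (Set.Ioo (-1:ℝ) 1 ∩ Set.Ioo (x - δ) (x + δ)) := by
      apply MeasureTheory.Integrable.add
      · refine MeasureTheory.integrableOn_const (ne_of_lt ?_) enorm_ne_top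
        calc volume (Set.Ioo (-1:ℝ) 1 ∩ Set.Ioo (x - δ) (x + δ))
            ≤ volume (Set.Ioo (-1:ℝ) 1) := measure_mono Set.inter_subset_left
          _ < ⊤ := by rw [Real.volume_Ioo]; exact ENNReal.ofReal_lt_top
      · exact ((integrableOn_rpow_abs x (-1) 1).mono_set
          Set.inter_subset_left).const_mul _
    apply MeasureTheory.Integrable.mono' hint
      (hmeas.mono_measure (MeasureTheory.Measure.restrict_mono Set.inter_subset_left le_rfl))
    filter_upwards [MeasureTheory.ae_restrict_mem
      (measurableSet_Ioo.inter measurableSet_Ioo)] with y hy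
    obtain ⟨hy1, hy2⟩ := hy
    have hyx : |y - x| < δ := by
      rw [abs_lt]; constructor <;> [linarith [hy2.1]; linarith [hy2.2]]
    have hfb : |f y| ≤ C * M :=
      (hbound y hy1).trans (mul_le_mul_of_nonneg_left (hMy y hy1 hyx) hC.le)
    have hG := G_le_rpow hx hy1
    have hGn := G_nonneg x y
    have hrpw : (0:ℝ) ≤ |x - y| ^ (-(1/2) : ℝ) := Real.rpow_nonneg (abs_nonneg _) _
    have hlog3 : (0:ℝ) ≤ Real.log 3 := Real.log_nonneg (by norm_num)
    rw [Real.norm_eq_abs, abs_mul, abs_of_nonneg hGn]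
    calc G x y * |f y| ≤ (1 / Real.pi * (Real.log 3 + 2 * |x - y| ^ (-(1/2) : ℝ))) * (C * M) := by
          apply mul_le_mul hG hfb (abs_nonneg _)
          positivity
      _ = g₁ y := by simp only [hg₁]; field_simp
  -- far part
  have hfar : MeasureTheory.IntegrableOn (fun y => G x y * f y)
      (Set.Ioo (-1:ℝ) 1 \ Set.Ioo (x - δ) (x + δ)) := by
    set g₂ : ℝ → ℝ := fun y => 3 * C / (Real.pi * δ) * (1 - y^2) ^ (b + 1/2) with hg₂
    have hint : MeasureTheory.IntegrableOn g₂
        (Set.Ioo (-1:ℝ) 1 \ Set.Ioo (x - δ) (x + δ)) :=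
      ((integrableOn_one_sub_sq (by linarith : (-1:ℝ) < b + 1/2)).mono_set
        Set.diff_subset).const_mul _
    apply MeasureTheory.Integrable.mono' hint
      (hmeas.mono_measure (MeasureTheory.Measure.restrict_mono Set.diff_subset le_rfl))
    filter_upwards [MeasureTheory.ae_restrict_mem
      (measurableSet_Ioo.diff measurableSet_Ioo)] with y hy
    obtain ⟨hy1, hy2⟩ := hy
    have hyx : δ ≤ |x - y| := by
      rw [Set.mem_Ioo, not_and_or, not_lt, not_lt] at hy2
      rcases hy2 with h | h
      · rw [abs_of_nonneg (by linarith)]; linarith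
      · rw [abs_of_nonpos (by linarith)]; linarith
    have hG := G_le_sqrt hx hy1
    have hGn := G_nonneg x y
    have h1y : (0:ℝ) < 1 - y^2 := by nlinarith [hy1.1, hy1.2]
    have hsq : (0:ℝ) ≤ Real.sqrt (1 - y^2) := Real.sqrt_nonneg _
    have hG2 : G x y ≤ 3 / Real.pi * Real.sqrt (1 - y^2) / δ := by
      apply hG.trans
      apply div_le_div_of_nonneg_left (by positivity) hδ hyx
    rw [Real.norm_eq_abs, abs_mul, abs_of_nonneg hGn]
    calc G x y * |f y| ≤ (3 / Real.pi * Real.sqrt (1 - y^2) / δ) * (C * (1 - y^2) ^ b) := by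
          apply mul_le_mul hG2 (hbound y hy1) (abs_nonneg _)
          positivity
      _ = 3 * C / (Real.pi * δ) * (Real.sqrt (1 - y^2) * (1 - y^2) ^ b) := by
          field_simp
      _ = g₂ y := by
          simp only [hg₂]
          rw [Real.sqrt_eq_rpow, ← Real.rpow_add h1y]
          ring_nf
  have := hnear.union hfar
  rwa [Set.inter_union_diff] at this

lemma rpow_piece (x a c : ℝ) (hac : a ≤ c) :
    MeasureTheory.IntegrableOn (fun y => |x - y| ^ (-(1/2):ℝ)) (Set.Ioo a c) :=
  integrableOn_rpow_abs x a c

lemma interval_rpow_val {x r : ℝ} (hr : 0 < r) :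
    ∫ y in Set.Ioo (x - 2*r) (x + 2*r), |x - y| ^ (-(1/2):ℝ) = 4 * Real.sqrt (2*r) := by
  have h02r : (0:ℝ) ≤ 2*r := by linarith
  have hi1 : IntervalIntegrable (fun y => |x - y| ^ (-(1/2):ℝ)) volume (x - 2*r) x :=
    (intervalIntegrable_iff_integrableOn_Ioo_of_le (by linarith)).2 (integrableOn_rpow_abs x _ _)
  have hi2 : IntervalIntegrable (fun y => |x - y| ^ (-(1/2):ℝ)) volume x (x + 2*r) :=
    (intervalIntegrable_iff_integrableOn_Ioo_of_le (by linarith)).2 (integrableOn_rpow_abs x _ _)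
  have hbase : ∫ t in (0:ℝ)..(2*r), t ^ (-(1/2):ℝ) = 2 * Real.sqrt (2*r) := by
    rw [integral_rpow (Or.inl (by norm_num))]
    rw [show -(1/2:ℝ) + 1 = 1/2 by norm_num, Real.zero_rpow (by norm_num), Real.sqrt_eq_rpow]
    ring
  have hleft : ∫ y in (x - 2*r)..x, |x - y| ^ (-(1/2):ℝ) = 2 * Real.sqrt (2*r) := by
    have hcongr : Set.EqOn (fun y => |x - y| ^ (-(1/2):ℝ))
        (fun y => (x - y) ^ (-(1/2):ℝ)) (Set.uIcc (x - 2*r) x) := by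
      intro y hy
      rw [Set.uIcc_of_le (by linarith)] at hy
      simp only
      rw [abs_of_nonneg (by linarith [hy.2] : (0:ℝ) ≤ x - y)]
    rw [intervalIntegral.integral_congr hcongr,
      intervalIntegral.integral_comp_sub_left (fun t => t ^ (-(1/2):ℝ)) x]
    simpa using hbase
  have hright : ∫ y in x..(x + 2*r), |x - y| ^ (-(1/2):ℝ) = 2 * Real.sqrt (2*r) := by
    have hcongr : Set.EqOn (fun y => |x - y| ^ (-(1/2):ℝ))
        (fun y => (y - x) ^ (-(1/2):ℝ)) (Set.uIcc x (x + 2*r)) := by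
      intro y hy
      rw [Set.uIcc_of_le (by linarith)] at hy
      simp only
      rw [abs_sub_comm, abs_of_nonneg (by linarith [hy.1] : (0:ℝ) ≤ y - x)]
    rw [intervalIntegral.integral_congr hcongr,
      intervalIntegral.integral_comp_sub_right (fun t => t ^ (-(1/2):ℝ)) x]
    simpa using hbase
  calc ∫ y in Set.Ioo (x - 2*r) (x + 2*r), |x - y| ^ (-(1/2):ℝ)
      = ∫ y in Set.Ioc (x - 2*r) (x + 2*r), |x - y| ^ (-(1/2):ℝ) :=
        (MeasureTheory.integral_Ioc_eq_integral_Ioo).symm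
    _ = ∫ y in (x - 2*r)..(x + 2*r), |x - y| ^ (-(1/2):ℝ) :=
        (intervalIntegral.integral_of_le (by linarith)).symm
    _ = (∫ y in (x - 2*r)..x, |x - y| ^ (-(1/2):ℝ))
        + ∫ y in x..(x + 2*r), |x - y| ^ (-(1/2):ℝ) :=
        (intervalIntegral.integral_add_adjacent_intervals hi1 hi2).symm
    _ = 4 * Real.sqrt (2*r) := by rw [hleft, hright]; ring

lemma A_bound {f : ℝ → ℝ} {x₀ x r D : ℝ} (hr : 0 < r) (hD : 0 ≤ D)
    (hx : x ∈ Set.Ioo (-1:ℝ) 1)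
    (hfi : MeasureTheory.IntegrableOn (fun y => G x y * f y) (Set.Ioo (-1:ℝ) 1))
    (hxx₀ : |x - x₀| ≤ r)
    (hfb : ∀ y ∈ Set.Ioo (-1:ℝ) 1 ∩ Set.Ioo (x₀ - r) (x₀ + r), |f y| ≤ D) :
    |∫ y in Set.Ioo (-1:ℝ) 1 ∩ Set.Ioo (x₀ - r) (x₀ + r), G x y * f y|
      ≤ D / Real.pi * (2 * Real.log 3 * r) + 2 * D / Real.pi * (4 * Real.sqrt (2*r)) := by
  have hπ := Real.pi_pos
  have hlog3 : (0:ℝ) ≤ Real.log 3 := Real.log_nonneg (by norm_num)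
  set s := Set.Ioo (-1:ℝ) 1 ∩ Set.Ioo (x₀ - r) (x₀ + r) with hs
  have hsmeas : MeasurableSet s := measurableSet_Ioo.inter measurableSet_Ioo
  set g₁ : ℝ → ℝ := fun y => D / Real.pi * Real.log 3
      + 2 * D / Real.pi * |x - y| ^ (-(1/2):ℝ) with hg₁
  have hrpownn : ∀ y : ℝ, (0:ℝ) ≤ |x - y| ^ (-(1/2):ℝ) := fun y =>
    Real.rpow_nonneg (abs_nonneg _) _
  have hg₁nonneg : ∀ y, 0 ≤ g₁ y := by
    intro y
    have := hrpownn y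
    simp only [hg₁]
    positivity
  have hconst_int : MeasureTheory.IntegrableOn (fun _ : ℝ => D / Real.pi * Real.log 3)
      (Set.Ioo (x₀ - r) (x₀ + r)) := by
    refine MeasureTheory.integrableOn_const (ne_of_lt ?_) enorm_ne_top
    rw [Real.volume_Ioo]
    exact ENNReal.ofReal_lt_top
  have hrpow_int : MeasureTheory.IntegrableOn
      (fun y => 2 * D / Real.pi * |x - y| ^ (-(1/2):ℝ)) (Set.Ioo (x₀ - r) (x₀ + r)) :=
    (integrableOn_rpow_abs x _ _).const_mul _
  have hg₁int : MeasureTheory.IntegrableOn g₁ (Set.Ioo (x₀ - r) (x₀ + r)) :=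
    hconst_int.add hrpow_int
  have hg₁int_s : MeasureTheory.IntegrableOn g₁ s :=
    hg₁int.mono_set Set.inter_subset_right
  have hFi_s : MeasureTheory.IntegrableOn (fun y => G x y * f y) s :=
    hfi.mono_set Set.inter_subset_left
  have step1 : |∫ y in s, G x y * f y| ≤ ∫ y in s, ‖G x y * f y‖ := by
    rw [show |∫ y in s, G x y * f y| = ‖∫ y in s, G x y * f y‖ from rfl]
    exact MeasureTheory.norm_integral_le_integral_norm _
  have step2 : ∫ y in s, ‖G x y * f y‖ ≤ ∫ y in s, g₁ y := by
    apply MeasureTheory.setIntegral_mono_on hFi_s.norm hg₁int_s hsmeas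
    intro y hy
    have hy1 : y ∈ Set.Ioo (-1:ℝ) 1 := hy.1
    have hG := G_le_rpow hx hy1
    have hGn := G_nonneg x y
    have hfy := hfb y hy
    rw [Real.norm_eq_abs, abs_mul, abs_of_nonneg hGn]
    calc G x y * |f y|
        ≤ (1 / Real.pi * (Real.log 3 + 2 * |x - y| ^ (-(1/2):ℝ))) * D := by
          apply mul_le_mul hG hfy (abs_nonneg _)
          have := hrpownn y
          positivity
      _ = g₁ y := by simp only [hg₁]; field_simp
  have step3 : ∫ y in s, g₁ y ≤ ∫ y in Set.Ioo (x₀ - r) (x₀ + r), g₁ y := by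
    apply MeasureTheory.setIntegral_mono_set hg₁int
      (Filter.Eventually.of_forall hg₁nonneg)
      (Filter.Eventually.of_forall (fun y hy => hy.2) : s ≤ᵐ[volume] _)
  have step4 : ∫ y in Set.Ioo (x₀ - r) (x₀ + r), g₁ y
      = D / Real.pi * Real.log 3 * (2*r)
        + 2 * D / Real.pi * ∫ y in Set.Ioo (x₀ - r) (x₀ + r), |x - y| ^ (-(1/2):ℝ) := by
    rw [MeasureTheory.integral_add hconst_int hrpow_int,
      MeasureTheory.setIntegral_const, MeasureTheory.integral_const_mul,
      Real.volume_real_Ioo, show x₀ + r - (x₀ - r) = 2*r by ring]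
    rw [max_eq_left (by linarith)]
    simp [smul_eq_mul]
    ring
  have step5 : ∫ y in Set.Ioo (x₀ - r) (x₀ + r), |x - y| ^ (-(1/2):ℝ)
      ≤ ∫ y in Set.Ioo (x - 2*r) (x + 2*r), |x - y| ^ (-(1/2):ℝ) := by
    apply MeasureTheory.setIntegral_mono_set (integrableOn_rpow_abs x _ _)
      (Filter.Eventually.of_forall hrpownn)
    apply Filter.Eventually.of_forall
    intro y hy
    rw [abs_le] at hxx₀
    exact ⟨by linarith [hy.1, hxx₀.1, hxx₀.2], by linarith [hy.2, hxx₀.1, hxx₀.2]⟩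
  have step6 := interval_rpow_val (x := x) hr
  have hfin : 2 * D / Real.pi * (∫ y in Set.Ioo (x₀ - r) (x₀ + r), |x - y| ^ (-(1/2):ℝ))
      ≤ 2 * D / Real.pi * (4 * Real.sqrt (2*r)) := by
    apply mul_le_mul_of_nonneg_left _ (by positivity)
    rw [← step6]
    exact step5
  calc |∫ y in s, G x y * f y| ≤ ∫ y in s, g₁ y := step1.trans step2
    _ ≤ ∫ y in Set.Ioo (x₀ - r) (x₀ + r), g₁ y := step3
    _ = D / Real.pi * Real.log 3 * (2*r)
        + 2 * D / Real.pi * ∫ y in Set.Ioo (x₀ - r) (x₀ + r), |x - y| ^ (-(1/2):ℝ) := step4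
    _ ≤ D / Real.pi * (2 * Real.log 3 * r) + 2 * D / Real.pi * (4 * Real.sqrt (2*r)) := by
        have h := hfin
        nlinarith [h]

set_option maxHeartbeats 1000000 in
theorem stmt_3 (b : ℝ) (hb : b > -(3/2)) (f : ℝ → ℝ) (hf : Measurable f)
    (C : ℝ) (hC : 0 < C)
    (hbound : ∀ x ∈ Set.Ioo (-1:ℝ) 1, |f x| ≤ C * (1 - x^2) ^ b) :
    (∀ x ∈ Set.Ioo (-1:ℝ) 1,
      MeasureTheory.IntegrableOn (fun y => G x y * f y) (Set.Ioo (-1:ℝ) 1)) ∧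
    ContinuousOn (fun x => ∫ y in Set.Ioo (-1:ℝ) 1, G x y * f y)
      (Set.Ioo (-1:ℝ) 1) := by
  refine ⟨integrable_Gf hb hf hC hbound, ?_⟩
  intro x₀ hx₀
  apply ContinuousAt.continuousWithinAt
  have hπ := Real.pi_pos
  have hx₀abs : |x₀| < 1 := abs_lt.2 ⟨hx₀.1, hx₀.2⟩
  set r₀ : ℝ := (1 - |x₀|) / 2 with hr₀def
  have hr₀ : 0 < r₀ := by simp only [hr₀def]; linarith
  set m : ℝ := 1 - ((1 + |x₀|) / 2)^2 with hmdef
  have hm : 0 < m := by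
    have h0 : (0:ℝ) ≤ (1 + |x₀|) / 2 := by positivity
    simp only [hmdef]; nlinarith
  set M : ℝ := m ^ b + 1 with hMdef
  have hM : 0 < M := by
    have := Real.rpow_pos_of_pos hm b
    simp only [hMdef]; linarith
  set D : ℝ := C * M with hDdef
  have hD : 0 < D := mul_pos hC hM
  rw [ContinuousAt, Metric.tendsto_nhds]
  intro ε hε
  -- choose r
  set φ : ℝ → ℝ := fun r => D / Real.pi * (2 * Real.log 3 * r)
      + 2 * D / Real.pi * (4 * Real.sqrt (2*r)) with hφdef
  have hφcont : Continuous φ := by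
    apply Continuous.add
    · fun_prop
    · apply Continuous.mul continuous_const
      apply Continuous.mul continuous_const
      exact Real.continuous_sqrt.comp (continuous_const.mul continuous_id)
  have hφtend : Filter.Tendsto φ (nhds 0) (nhds 0) := by
    have h0 : φ 0 = 0 := by simp [hφdef]
    simpa [h0] using hφcont.tendsto 0
  obtain ⟨r₁, hr₁pos, hr₁⟩ := Metric.tendsto_nhds_nhds.1 hφtend (ε/3) (by linarith)
  set r : ℝ := min (r₁/2) r₀ with hrdef
  have hrpos : 0 < r := lt_min (by linarith) hr₀
  have hrr₀ : r ≤ r₀ := min_le_right _ _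
  have hφr : φ r < ε/3 := by
    have hd : dist r 0 < r₁ := by
      rw [Real.dist_eq, sub_zero, abs_of_pos hrpos]
      calc r ≤ r₁/2 := min_le_left _ _
        _ < r₁ := by linarith
    have := hr₁ hd
    rw [Real.dist_eq, sub_zero] at this
    exact (le_abs_self _).trans_lt this
  -- bound on f near x₀
  have hfb : ∀ y ∈ Set.Ioo (-1:ℝ) 1 ∩ Set.Ioo (x₀ - r) (x₀ + r), |f y| ≤ D := by
    rintro y ⟨hy1, hy2⟩
    refine (hbound y hy1).trans (mul_le_mul_of_nonneg_left ?_ hC.le)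
    apply M_bound hm hy1
    have h1 : |y - x₀| < r := by
      rw [abs_lt]; exact ⟨by linarith [hy2.1], by linarith [hy2.2]⟩
    have h2 : |y| ≤ (1 + |x₀|) / 2 := by
      calc |y| = |y - x₀ + x₀| := by ring_nf
        _ ≤ |y - x₀| + |x₀| := abs_add_le _ _
        _ ≤ r + |x₀| := by linarith
        _ ≤ r₀ + |x₀| := by linarith
        _ = (1 + |x₀|) / 2 := by simp only [hr₀def]; ring
    have h3 : y^2 ≤ ((1 + |x₀|) / 2)^2 := by
      rw [← sq_abs y]
      apply sq_le_sq' <;> nlinarith [abs_nonneg y]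
    simp only [hmdef]; linarith
  -- splitting
  set J : Set ℝ := Set.Ioo (x₀ - r) (x₀ + r) with hJ
  have hdisj : Disjoint (Set.Ioo (-1:ℝ) 1 ∩ J) (Set.Ioo (-1:ℝ) 1 \ J) :=
    Set.disjoint_left.2 fun y hy1 hy2 => hy2.2 hy1.2
  have hsplit : ∀ x ∈ Set.Ioo (-1:ℝ) 1, (∫ y in Set.Ioo (-1:ℝ) 1, G x y * f y)
      = (∫ y in Set.Ioo (-1:ℝ) 1 ∩ J, G x y * f y)
        + ∫ y in Set.Ioo (-1:ℝ) 1 \ J, G x y * f y := by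
    intro x hxI
    have hint := integrable_Gf hb hf hC hbound x hxI
    conv_lhs => rw [← Set.inter_union_diff (Set.Ioo (-1:ℝ) 1) J]
    exact MeasureTheory.setIntegral_union hdisj
      (measurableSet_Ioo.diff measurableSet_Ioo)
      (hint.mono_set Set.inter_subset_left) (hint.mono_set Set.diff_subset)
  -- continuity of far part
  have hB : ContinuousAt (fun x => ∫ y in Set.Ioo (-1:ℝ) 1 \ J, G x y * f y) x₀ := by
    apply MeasureTheory.continuousAt_of_dominated
      (bound := fun y => 6 * C / (Real.pi * r) * (1 - y^2) ^ (b + 1/2))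
    · exact Filter.Eventually.of_forall
        (fun x => ((measurable_G x).mul hf).aestronglyMeasurable)
    · filter_upwards [Metric.ball_mem_nhds x₀ (show (0:ℝ) < r/2 by linarith)] with x hxball
      filter_upwards [MeasureTheory.ae_restrict_mem
        (measurableSet_Ioo.diff measurableSet_Ioo)] with y hy
      obtain ⟨hy1, hy2⟩ := hy
      have h1y : (0:ℝ) < 1 - y^2 := by nlinarith [hy1.1, hy1.2]
      have hbnn : (0:ℝ) ≤ 6 * C / (Real.pi * r) * (1 - y^2) ^ (b + 1/2) := by
        have := Real.rpow_nonneg h1y.le (b + 1/2)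
        positivity
      by_cases hxI : x ∈ Set.Ioo (-1:ℝ) 1
      · have hxx₀ : |x - x₀| < r/2 := by
          simp only [Metric.mem_ball, Real.dist_eq] at hxball
          exact hxball
        have hyx₀ : r ≤ |y - x₀| := by
          rw [Set.mem_Ioo, not_and_or, not_lt, not_lt] at hy2
          rcases hy2 with h | h
          · rw [abs_of_nonpos (by linarith)]; linarith
          · rw [abs_of_nonneg (by linarith)]; linarith
        have hxy : r/2 ≤ |x - y| := by
          have h1 : |y - x₀| ≤ |y - x| + |x - x₀| := by
            calc |y - x₀| = |y - x + (x - x₀)| := by ring_nf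
              _ ≤ |y - x| + |x - x₀| := abs_add_le _ _
          rw [abs_sub_comm x y]
          linarith
        have hG := G_le_sqrt hxI hy1
        have hGn := G_nonneg x y
        have hsq : (0:ℝ) ≤ Real.sqrt (1 - y^2) := Real.sqrt_nonneg _
        have hG2 : G x y ≤ 3 / Real.pi * Real.sqrt (1 - y^2) / (r/2) := by
          apply hG.trans
          apply div_le_div_of_nonneg_left (by positivity) (by linarith) hxy
        rw [Real.norm_eq_abs, abs_mul, abs_of_nonneg hGn]
        calc G x y * |f y|
            ≤ (3 / Real.pi * Real.sqrt (1 - y^2) / (r/2)) * (C * (1 - y^2) ^ b) := by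
              apply mul_le_mul hG2 (hbound y hy1) (abs_nonneg _)
              positivity
          _ = 6 * C / (Real.pi * r) * (Real.sqrt (1 - y^2) * (1 - y^2) ^ b) := by
              field_simp; ring
          _ = 6 * C / (Real.pi * r) * (1 - y^2) ^ (b + 1/2) := by
              rw [Real.sqrt_eq_rpow, ← Real.rpow_add h1y]
              ring_nf
      · have : G x y = 0 := by
          unfold G
          rw [if_neg]
          intro h
          exact hxI h.1
        rw [this, zero_mul, norm_zero]
        exact hbnn
    · exact ((integrableOn_one_sub_sq (by linarith : (-1:ℝ) < b + 1/2)).mono_set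
        Set.diff_subset).const_mul _
    · filter_upwards [MeasureTheory.ae_restrict_mem
        (measurableSet_Ioo.diff measurableSet_Ioo)] with y hy
      obtain ⟨hy1, hy2⟩ := hy
      apply ContinuousAt.mul _ continuousAt_const
      have hyne : y ≠ x₀ := by
        intro h
        exact hy2 (by rw [h]; exact ⟨by linarith, by linarith⟩)
      have hd : (0:ℝ) < |x₀ - y| := abs_pos.2 (sub_ne_zero.2 (Ne.symm hyne))
      have hnum := N_pos hx₀ hy1
      have hcont : ContinuousAt (fun x => (1 / Real.pi) *
          Real.log ((1 - x*y + Real.sqrt ((1 - x^2) * (1 - y^2))) / |x - y|)) x₀ := by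
        apply ContinuousAt.mul continuousAt_const
        apply ContinuousAt.log
        · apply ContinuousAt.div
          · apply ContinuousAt.add
            · fun_prop
            · exact (Real.continuous_sqrt.continuousAt).comp (by fun_prop)
          · fun_prop
          · exact ne_of_gt hd
        · exact ne_of_gt (div_pos hnum hd)
      apply hcont.congr
      filter_upwards [isOpen_Ioo.mem_nhds hx₀] with x hxI
      exact (G_eq hxI hy1).symm
  have hBev := Metric.tendsto_nhds.1 hB (ε/3) (by linarith)
  filter_upwards [hBev, isOpen_Ioo.mem_nhds hx₀,
    Metric.ball_mem_nhds x₀ hrpos] with x hB3 hxI hxball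
  have hux := hsplit x hxI
  have hux₀ := hsplit x₀ hx₀
  have hxx₀r : |x - x₀| ≤ r := by
    simp only [Metric.mem_ball, Real.dist_eq] at hxball
    exact hxball.le
  have hAx := A_bound hrpos hD.le hxI (integrable_Gf hb hf hC hbound x hxI) hxx₀r hfb
  have hAx₀ := A_bound hrpos hD.le hx₀ (integrable_Gf hb hf hC hbound x₀ hx₀)
    (by simpa using hrpos.le : |x₀ - x₀| ≤ r) hfb
  rw [Real.dist_eq] at hB3 ⊢
  rw [hux, hux₀]
  set Ax := ∫ y in Set.Ioo (-1:ℝ) 1 ∩ J, G x y * f y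
  set Ax₀ := ∫ y in Set.Ioo (-1:ℝ) 1 ∩ J, G x₀ y * f y
  set Bx := ∫ y in Set.Ioo (-1:ℝ) 1 \ J, G x y * f y
  set Bx₀ := ∫ y in Set.Ioo (-1:ℝ) 1 \ J, G x₀ y * f y
  have hφrA : |Ax| ≤ φ r := hAx
  have hφrA₀ : |Ax₀| ≤ φ r := hAx₀
  calc |Ax + Bx - (Ax₀ + Bx₀)| = |(Ax - Ax₀) + (Bx - Bx₀)| := by ring_nf
    _ ≤ |Ax - Ax₀| + |Bx - Bx₀| := abs_add_le _ _
    _ ≤ |Ax| + |Ax₀| + |Bx - Bx₀| := by linarith [abs_sub Ax Ax₀]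
    _ < ε/3 + ε/3 + ε/3 := by
        apply add_lt_add_of_le_of_lt _ hB3
        have := hφr
        linarith
    _ = ε := by ring
end

section
/- The function g extends to a continuous function on (-1,1)×(-1,1), and for all x, z ∈ (-1,1) with x ≠ z and x ≠ -z one has ∂g/∂x (x,z) = -(1/2)·[G(x,z) - G(x,-z)] = -(1/(2π))·argsinh( 2·x·z·√((1-x²)(1-z²)) / (|x-z|·|x+z|) ). In particular, for every z ∈ (0,1), the function x ↦ g(x,z) is decreasing on (0,1). -/
/-- The Green function `g(x,z)` for the operator `u ↦ (I u)'` on `(-1,1)`. -/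
noncomputable def g (x z : ℝ) : ℝ :=
  if x ∈ Set.Ioo (-1:ℝ) 1 then
    (1/2) * ((z - x) * G x z + (z + x) * G x (-z))
  else 0

open Real Set

section auxiliary

lemma one_sub_mul_pos' {x y : ℝ} (hx : x ∈ Ioo (-1:ℝ) 1) (hy : y ∈ Ioo (-1:ℝ) 1) :
    0 < 1 - x*y := by
  nlinarith [hx.1, hx.2, hy.1, hy.2,
    mul_pos (sub_pos.2 hx.2) (by linarith [hy.1] : (0:ℝ) < 1 + y),
    mul_pos (by linarith [hx.1] : (0:ℝ) < 1 + x) (sub_pos.2 hy.2)]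

lemma one_add_mul_pos' {x y : ℝ} (hx : x ∈ Ioo (-1:ℝ) 1) (hy : y ∈ Ioo (-1:ℝ) 1) :
    0 < 1 + x*y := by
  nlinarith [mul_pos (sub_pos.2 hx.2) (sub_pos.2 hy.2),
    mul_pos (by linarith [hx.1] : (0:ℝ) < 1 + x) (by linarith [hy.1] : (0:ℝ) < 1 + y)]

lemma neg_mem_Ioo' {z : ℝ} (hz : z ∈ Ioo (-1:ℝ) 1) : -z ∈ Ioo (-1:ℝ) 1 := by
  constructor
  · linarith [hz.2]
  · linarith [hz.1]

lemma key_alg (x y s : ℝ) (hs : 0 < s) (hs2 : s^2 = (1-x^2)*(1-y^2)) (hxy : x - y ≠ 0)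
    (hA : (0:ℝ) < 1 - x*y + s) :
    (y - x) * ((-y + -(2*x)*(1-y^2)/(2*s))/(1-x*y+s) - 1/(x-y)) = (1-y^2)/s := by
  have hs' : s ≠ 0 := ne_of_gt hs
  have hA' : 1 - x*y + s ≠ 0 := ne_of_gt hA
  have hA'' : 1 - y*x + s ≠ 0 := by rw [mul_comm]; exact hA'
  field_simp
  linear_combination (x - y) * hs2

lemma hasDerivAt_TT {x y : ℝ} (hx : x ∈ Ioo (-1:ℝ) 1) (hy : y ∈ Ioo (-1:ℝ) 1) (hxy : x ≠ y) :
    HasDerivAt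
      (fun t : ℝ => (y - t) * Real.log (1 - t*y + Real.sqrt ((1-t^2)*(1-y^2)))
        - (y - t) * Real.log (y - t))
      (-(Real.log (1 - x*y + Real.sqrt ((1-x^2)*(1-y^2))) - Real.log (x - y))
        + (1-y^2)/Real.sqrt ((1-x^2)*(1-y^2))) x := by
  have hx2 : (0:ℝ) < 1 - x^2 := by nlinarith [hx.1, hx.2]
  have hy2 : (0:ℝ) < 1 - y^2 := by nlinarith [hy.1, hy.2]
  have hv : (0:ℝ) < (1-x^2)*(1-y^2) := mul_pos hx2 hy2
  set s := Real.sqrt ((1-x^2)*(1-y^2)) with hsdef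
  have hs : 0 < s := Real.sqrt_pos.2 hv
  have hs2 : s^2 = (1-x^2)*(1-y^2) := Real.sq_sqrt hv.le
  have hA : (0:ℝ) < 1 - x*y + s := by
    have := one_sub_mul_pos' hx hy; linarith
  have hxy' : x - y ≠ 0 := sub_ne_zero.2 hxy
  have hyx' : y - x ≠ 0 := sub_ne_zero.2 (Ne.symm hxy)
  have hv' : HasDerivAt (fun t : ℝ => (1-t^2)*(1-y^2)) (-(2*x)*(1-y^2)) x := by
    have := ((hasDerivAt_pow 2 x).const_sub 1).mul_const (1-y^2)
    refine this.congr_deriv ?_; norm_num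
  have hS : HasDerivAt (fun t : ℝ => Real.sqrt ((1-t^2)*(1-y^2))) (-(2*x)*(1-y^2)/(2*s)) x :=
    hv'.sqrt hv.ne'
  have hu : HasDerivAt (fun t : ℝ => 1 - t*y + Real.sqrt ((1-t^2)*(1-y^2)))
      (-y + -(2*x)*(1-y^2)/(2*s)) x := by
    have h1 : HasDerivAt (fun t : ℝ => 1 - t*y) (-y) x := by
      simpa using ((hasDerivAt_id x).mul_const y).const_sub 1
    exact h1.add hS
  have hlogu : HasDerivAt (fun t : ℝ => Real.log (1 - t*y + Real.sqrt ((1-t^2)*(1-y^2))))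
      ((-y + -(2*x)*(1-y^2)/(2*s))/(1 - x*y + s)) x := hu.log (ne_of_gt hA)
  have hlog3 : HasDerivAt (fun t : ℝ => Real.log (y - t)) ((-1)/(y-x)) x :=
    ((hasDerivAt_id x).const_sub y).log hyx'
  have hc : HasDerivAt (fun t : ℝ => y - t) (-1 : ℝ) x := (hasDerivAt_id x).const_sub y
  have total := (hc.mul hlogu).sub (hc.mul hlog3)
  refine total.congr_deriv ?_
  symm
  have hlogeq : Real.log (x - y) = Real.log (y - x) := by
    rw [show x - y = -(y-x) by ring, Real.log_neg_eq_log]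
  rw [hlogeq]
  have key := key_alg x y s hs hs2 hxy' hA
  have h5 : (y - x) * (1/(x-y)) = -1 := by field_simp; ring
  have h6 : (y - x) * ((-1)/(y-x)) = -1 := by field_simp
  linear_combination -key - h5 + h6

lemma G_val {x y : ℝ} (hx : x ∈ Ioo (-1:ℝ) 1) (hy : y ∈ Ioo (-1:ℝ) 1) (hxy : x ≠ y) :
    G x y = (1/Real.pi) *
      (Real.log (1 - x*y + Real.sqrt ((1-x^2)*(1-y^2))) - Real.log (x - y)) := by
  have hA : (0:ℝ) < 1 - x*y + Real.sqrt ((1-x^2)*(1-y^2)) := by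
    have := one_sub_mul_pos' hx hy
    have := Real.sqrt_nonneg ((1-x^2)*(1-y^2))
    linarith
  have habs : |x - y| ≠ 0 := abs_ne_zero.2 (sub_ne_zero.2 hxy)
  rw [G, if_pos ⟨hx, hy⟩, Real.log_div hA.ne' habs, Real.log_abs]

lemma G_mul_eq {x y : ℝ} (hx : x ∈ Ioo (-1:ℝ) 1) (hy : y ∈ Ioo (-1:ℝ) 1) :
    (y - x) * G x y = (1/Real.pi) *
      ((y - x) * Real.log (1 - x*y + Real.sqrt ((1-x^2)*(1-y^2)))
        - (y - x) * Real.log (y - x)) := by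
  rcases eq_or_ne x y with h | h
  · subst h; simp
  · rw [G_val hx hy h]
    rw [show Real.log (x - y) = Real.log (y - x) by
      rw [show x - y = -(y-x) by ring, Real.log_neg_eq_log]]
    ring

lemma g_eq {x z : ℝ} (hx : x ∈ Ioo (-1:ℝ) 1) (hz : z ∈ Ioo (-1:ℝ) 1) :
    g x z = (1/(2*Real.pi)) *
      (((z - x) * Real.log (1 - x*z + Real.sqrt ((1-x^2)*(1-z^2)))
          - (z - x) * Real.log (z - x))
        + ((z + x) * Real.log (1 + x*z + Real.sqrt ((1-x^2)*(1-z^2)))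
          - (z + x) * Real.log (z + x))) := by
  have hz' : -z ∈ Ioo (-1:ℝ) 1 := neg_mem_Ioo' hz
  have h1 := G_mul_eq hx hz
  have h2 := G_mul_eq hx hz'
  rw [g, if_pos hx, h1]
  have e1 : 1 - x*(-z) = 1 + x*z := by ring
  have e2 : (1:ℝ) - (-z)^2 = 1 - z^2 := by ring
  have e3 : Real.log (-z - x) = Real.log (z + x) := by
    rw [show -z - x = -(z+x) by ring, Real.log_neg_eq_log]
  rw [e1, e2, e3] at h2
  have h2' : (z + x) * G x (-z) = -((-z - x) * G x (-z)) := by ring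
  rw [h2', h2]
  ring

lemma hasDerivAt_g {x z : ℝ} (hx : x ∈ Ioo (-1:ℝ) 1) (hz : z ∈ Ioo (-1:ℝ) 1)
    (hxz : x ≠ z) (hxz' : x ≠ -z) :
    HasDerivAt (fun t => g t z) (-(1/2) * (G x z - G x (-z))) x := by
  have hz' : -z ∈ Ioo (-1:ℝ) 1 := neg_mem_Ioo' hz
  have hA := hasDerivAt_TT hx hz hxz
  have hB0 := hasDerivAt_TT hx hz' hxz'
  have hsum := (hA.add hB0.neg).const_mul (1/(2*Real.pi))
  have heq : (fun t => g t z) =ᶠ[nhds x]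
      (fun t => 1/(2*Real.pi) *
        (((z - t) * Real.log (1 - t*z + Real.sqrt ((1-t^2)*(1-z^2)))
            - (z - t) * Real.log (z - t))
          + -((-z - t) * Real.log (1 - t*(-z) + Real.sqrt ((1-t^2)*(1-(-z)^2)))
            - (-z - t) * Real.log (-z - t)))) := by
    filter_upwards [Ioo_mem_nhds hx.1 hx.2] with t ht
    rw [g_eq ht hz]
    have e1 : 1 - t*(-z) = 1 + t*z := by ring
    have e2 : (1:ℝ) - (-z)^2 = 1 - z^2 := by ring
    have e3 : Real.log (-z - t) = Real.log (z + t) := by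
      rw [show -z - t = -(z+t) by ring, Real.log_neg_eq_log]
    rw [e1, e2, e3]
    ring_nf
  have hg := HasDerivAt.congr_of_eventuallyEq hsum heq
  refine hg.congr_deriv ?_
  symm
  have e1 : 1 - x*(-z) = 1 + x*z := by ring
  have e2 : (1:ℝ) - (-z)^2 = 1 - z^2 := by ring
  have e4 : x - (-z) = x + z := by ring
  rw [G_val hx hz hxz, G_val hx hz' hxz', e1, e2, e4]
  ring

lemma G_diff_arsinh {x z : ℝ} (hx : x ∈ Ioo (-1:ℝ) 1) (hz : z ∈ Ioo (-1:ℝ) 1)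
    (hxz : x ≠ z) (hxz' : x ≠ -z) :
    -(1/2) * (G x z - G x (-z)) =
      -(1 / (2 * Real.pi)) * Real.arsinh
        (2 * x * z * Real.sqrt ((1 - x^2) * (1 - z^2)) / (|x - z| * |x + z|)) := by
  have hx2 : (0:ℝ) < 1 - x^2 := by nlinarith [hx.1, hx.2]
  have hz2 : (0:ℝ) < 1 - z^2 := by nlinarith [hz.1, hz.2]
  have hv : (0:ℝ) < (1-x^2)*(1-z^2) := mul_pos hx2 hz2
  have hz' : -z ∈ Ioo (-1:ℝ) 1 := neg_mem_Ioo' hz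
  set s : ℝ := Real.sqrt ((1-x^2)*(1-z^2)) with hsdef
  have hs : 0 < s := Real.sqrt_pos.2 hv
  have hs2 : s^2 = (1-x^2)*(1-z^2) := Real.sq_sqrt hv.le
  have hxz0 : x - z ≠ 0 := sub_ne_zero.2 hxz
  have hxz0' : x + z ≠ 0 := by
    intro h; exact hxz' (by linarith)
  set d : ℝ := |x - z| * |x + z| with hddef
  have hd : 0 < d := mul_pos (abs_pos.2 hxz0) (abs_pos.2 hxz0')
  have hd2 : d^2 = (x-z)^2*(x+z)^2 := by rw [hddef, mul_pow, sq_abs, sq_abs]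
  set u : ℝ := 2 * x * z * s / d with hudef
  have hN : (0:ℝ) ≤ x^2 + z^2 - 2*x^2*z^2 := by
    nlinarith [mul_nonneg (sq_nonneg x) hz2.le, mul_nonneg (sq_nonneg z) hx2.le]
  have hu2 : 1 + u^2 = ((x^2 + z^2 - 2*x^2*z^2)/d)^2 := by
    rw [hudef]
    field_simp
    linear_combination hd2 + (4*x^2*z^2) * hs2
  have hsqrt : Real.sqrt (1 + u^2) = (x^2 + z^2 - 2*x^2*z^2)/d := by
    rw [hu2, Real.sqrt_sq (div_nonneg hN hd.le)]
  have hApos : (0:ℝ) < 1 - x*z + s := by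
    have := one_sub_mul_pos' hx hz; linarith
  have hQpos : (0:ℝ) < 1 + x*z + s := by
    have := one_add_mul_pos' hx hz; linarith
  have hQ2 : 1 + x*z - s = (x+z)^2/(1+x*z+s) := by
    rw [eq_div_iff hQpos.ne']
    linear_combination -hs2
  have hQ3 : (0:ℝ) < 1 + x*z - s := by
    rw [hQ2]
    exact div_pos (by positivity) hQpos
  have hnum : u + (x^2 + z^2 - 2*x^2*z^2)/d = ((1 - x*z + s)*(1 + x*z - s))/d := by
    rw [hudef, ← add_div]
    congr 1
    linear_combination hs2
  have harsinh : Real.arsinh u =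
      Real.log (1 - x*z + s) + (2*Real.log (x+z) - Real.log (1+x*z+s))
        - (Real.log (x-z) + Real.log (x+z)) := by
    rw [Real.arsinh, hsqrt, hnum,
      Real.log_div (mul_ne_zero hApos.ne' hQ3.ne') hd.ne']
    rw [Real.log_mul hApos.ne' hQ3.ne']
    rw [show Real.log (1 + x*z - s) = 2*Real.log (x+z) - Real.log (1+x*z+s) by
      rw [hQ2, Real.log_div (pow_ne_zero 2 hxz0') hQpos.ne', Real.log_pow]
      norm_num]
    rw [hddef, Real.log_mul (abs_ne_zero.2 hxz0) (abs_ne_zero.2 hxz0'),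
      Real.log_abs, Real.log_abs]
  rw [G_val hx hz hxz, G_val hx hz' hxz']
  rw [show 1 - x*(-z) = 1 + x*z by ring, show (1:ℝ) - (-z)^2 = 1 - z^2 by ring,
    show x - (-z) = x + z by ring]
  rw [← hsdef, harsinh]
  ring

lemma g_contOn : ContinuousOn (fun p : ℝ × ℝ => g p.1 p.2)
    (Set.Ioo (-1:ℝ) 1 ×ˢ Set.Ioo (-1:ℝ) 1) := by
  have csq : Continuous fun p : ℝ × ℝ => Real.sqrt ((1-p.1^2)*(1-p.2^2)) :=
    Real.continuous_sqrt.comp (by fun_prop)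
  have hsnn : ∀ p : ℝ × ℝ, 0 ≤ Real.sqrt ((1-p.1^2)*(1-p.2^2)) :=
    fun p => Real.sqrt_nonneg _
  have clog1 : ContinuousOn
      (fun p : ℝ × ℝ => Real.log (1 - p.1*p.2 + Real.sqrt ((1-p.1^2)*(1-p.2^2))))
      (Set.Ioo (-1:ℝ) 1 ×ˢ Set.Ioo (-1:ℝ) 1) := by
    apply ContinuousOn.log
    · exact ((continuous_const.sub (continuous_fst.mul continuous_snd)).add csq).continuousOn
    · intro p hp
      have := one_sub_mul_pos' hp.1 hp.2
      have := hsnn p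
      positivity
  have clog2 : ContinuousOn
      (fun p : ℝ × ℝ => Real.log (1 + p.1*p.2 + Real.sqrt ((1-p.1^2)*(1-p.2^2))))
      (Set.Ioo (-1:ℝ) 1 ×ˢ Set.Ioo (-1:ℝ) 1) := by
    apply ContinuousOn.log
    · exact ((continuous_const.add (continuous_fst.mul continuous_snd)).add csq).continuousOn
    · intro p hp
      have := one_add_mul_pos' hp.1 hp.2
      have := hsnn p
      positivity
  have cphi1 : Continuous fun p : ℝ × ℝ => (p.2 - p.1) * Real.log (p.2 - p.1) :=
    Real.continuous_mul_log.comp (continuous_snd.sub continuous_fst)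
  have cphi2 : Continuous fun p : ℝ × ℝ => (p.2 + p.1) * Real.log (p.2 + p.1) :=
    Real.continuous_mul_log.comp (continuous_snd.add continuous_fst)
  have cF : ContinuousOn
      (fun p : ℝ × ℝ => (1/(2*Real.pi)) *
        (((p.2 - p.1) * Real.log (1 - p.1*p.2 + Real.sqrt ((1-p.1^2)*(1-p.2^2)))
            - (p.2 - p.1) * Real.log (p.2 - p.1))
          + ((p.2 + p.1) * Real.log (1 + p.1*p.2 + Real.sqrt ((1-p.1^2)*(1-p.2^2)))
            - (p.2 + p.1) * Real.log (p.2 + p.1))))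
      (Set.Ioo (-1:ℝ) 1 ×ˢ Set.Ioo (-1:ℝ) 1) := by
    apply ContinuousOn.mul continuousOn_const
    apply ContinuousOn.add
    · exact (((continuous_snd.sub continuous_fst).continuousOn).mul clog1).sub
        cphi1.continuousOn
    · exact (((continuous_snd.add continuous_fst).continuousOn).mul clog2).sub
        cphi2.continuousOn
  exact cF.congr (fun p hp => g_eq hp.1 hp.2)

end auxiliary

theorem stmt_4 :
    ContinuousOn (fun p : ℝ × ℝ => g p.1 p.2)
      (Set.Ioo (-1:ℝ) 1 ×ˢ Set.Ioo (-1:ℝ) 1) ∧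
    (∀ x ∈ Set.Ioo (-1:ℝ) 1, ∀ z ∈ Set.Ioo (-1:ℝ) 1, x ≠ z → x ≠ -z →
      HasDerivAt (fun t => g t z) (-(1/2) * (G x z - G x (-z))) x ∧
      -(1/2) * (G x z - G x (-z)) =
        -(1 / (2 * Real.pi)) * Real.arsinh
          (2 * x * z * Real.sqrt ((1 - x^2) * (1 - z^2)) / (|x - z| * |x + z|))) ∧
    (∀ z ∈ Set.Ioo (0:ℝ) 1, StrictAntiOn (fun x => g x z) (Set.Ioo (0:ℝ) 1)) := by
  refine ⟨g_contOn, fun x hx z hz hxz hxz' =>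
    ⟨hasDerivAt_g hx hz hxz hxz', G_diff_arsinh hx hz hxz hxz'⟩, ?_⟩
  intro z hz
  have hz1 : z ∈ Ioo (-1:ℝ) 1 := ⟨by linarith [hz.1], hz.2⟩
  have hcont : ContinuousOn (fun x => g x z) (Ioo (0:ℝ) 1) := by
    have hmap : MapsTo (fun x : ℝ => (x, z)) (Ioo (0:ℝ) 1)
        (Set.Ioo (-1:ℝ) 1 ×ˢ Set.Ioo (-1:ℝ) 1) := by
      intro x hx
      exact ⟨⟨by linarith [hx.1], hx.2⟩, hz1⟩
    exact g_contOn.comp (Continuous.continuousOn (by fun_prop)) hmap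
  have hderiv : ∀ x ∈ Ioo (0:ℝ) 1, x ≠ z → deriv (fun x => g x z) x < 0 := by
    intro x hx0 hxz
    have hx1 : x ∈ Ioo (-1:ℝ) 1 := ⟨by linarith [hx0.1], hx0.2⟩
    have hxz' : x ≠ -z := by
      intro h
      rw [h] at hx0
      linarith [hx0.1, hz.1]
    have hd := hasDerivAt_g hx1 hz1 hxz hxz'
    rw [hd.deriv, G_diff_arsinh hx1 hz1 hxz hxz']
    have hx2 : (0:ℝ) < 1 - x^2 := by nlinarith [hx1.1, hx1.2]
    have hz2 : (0:ℝ) < 1 - z^2 := by nlinarith [hz1.1, hz1.2]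
    have hv : (0:ℝ) < (1-x^2)*(1-z^2) := mul_pos hx2 hz2
    have hs : 0 < Real.sqrt ((1-x^2)*(1-z^2)) := Real.sqrt_pos.2 hv
    have hxz0 : x - z ≠ 0 := sub_ne_zero.2 hxz
    have hxz0' : x + z ≠ 0 := by intro h; exact hxz' (by linarith)
    have hupos : 0 < 2 * x * z * Real.sqrt ((1 - x^2) * (1 - z^2)) / (|x - z| * |x + z|) := by
      apply div_pos
      · have : (0:ℝ) < 2 * x * z := by nlinarith [hx0.1, hz.1]
        exact mul_pos this hs
      · exact mul_pos (abs_pos.2 hxz0) (abs_pos.2 hxz0')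
    have harc : 0 < Real.arsinh
        (2 * x * z * Real.sqrt ((1 - x^2) * (1 - z^2)) / (|x - z| * |x + z|)) :=
      Real.arsinh_pos_iff.2 hupos
    have hpi : (0:ℝ) < 1 / (2 * Real.pi) := by positivity
    nlinarith [mul_pos hpi harc]
  have H : ∀ p q : ℝ, 0 < p → p < q → q < 1 → z ∉ Ioo p q → g q z < g p z := by
    intro p q hp hpq hq hzout
    have hsub : Icc p q ⊆ Ioo (0:ℝ) 1 :=
      fun t ht => ⟨lt_of_lt_of_le hp ht.1, lt_of_le_of_lt ht.2 hq⟩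
    have hanti := strictAntiOn_of_deriv_neg (convex_Icc p q) (hcont.mono hsub)
      (fun t ht => by
        rw [interior_Icc] at ht
        exact hderiv t (hsub (Ioo_subset_Icc_self ht)) (fun h => hzout (h ▸ ht)))
    exact hanti (left_mem_Icc.2 hpq.le) (right_mem_Icc.2 hpq.le) hpq
  intro a ha b hb hab
  by_cases hcase : z ∈ Ioo a b
  · have h1 := H a z ha.1 hcase.1 hz.2 (fun h => lt_irrefl z h.2)
    have h2 := H z b hz.1 hcase.2 hb.2 (fun h => lt_irrefl z h.1)
    exact lt_trans h2 h1
  · exact H a b ha.1 hab hb.2 hcase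
end

section
/- For all (x,z) ∈ ℝ² one has g(x,-z) = -g(x,z) and g(-x,z) = g(x,z), i.e. z ↦ g(x,z) is odd and x ↦ g(x,z) is even. Moreover g(x,z) > 0 for all x ∈ (-1,1) and all z ∈ (0,1) (and consequently g(x,z) < 0 for all x ∈ (-1,1) and all z ∈ (-1,0)). -/
open Real Set



lemma log_ratio_gt (r : ℝ) (h0 : 0 < r) (h1 : r < 1) :
    2*r < Real.log (1+r) - Real.log (1-r) := by
  have key : StrictMonoOn (fun t : ℝ => Real.log (1+t) - Real.log (1-t) - 2*t) (Set.Ico 0 1) := by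
    apply strictMonoOn_of_deriv_pos (convex_Ico 0 1)
    · apply ContinuousOn.sub
      apply ContinuousOn.sub
      · apply ContinuousOn.log (by fun_prop)
        intro t ht; simp only [Set.mem_Ico] at ht; nlinarith [ht.1]
      · apply ContinuousOn.log (by fun_prop)
        intro t ht; simp only [Set.mem_Ico] at ht; nlinarith [ht.2]
      · fun_prop
    · intro t ht
      rw [interior_Ico, Set.mem_Ioo] at ht
      have hd : HasDerivAt (fun t : ℝ => Real.log (1+t) - Real.log (1-t) - 2*t)
          (1/(1+t) - (-1)/(1-t) - 2) t := by
        have h1 : HasDerivAt (fun t : ℝ => Real.log (1+t)) (1/(1+t)) t := by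
          have := ((hasDerivAt_id t).const_add 1).log (by show (1:ℝ)+ id t ≠ 0; simp only [id]; nlinarith [ht.1])
          simpa using this
        have h2 : HasDerivAt (fun t : ℝ => Real.log (1-t)) ((-1)/(1-t)) t := by
          have := ((hasDerivAt_id t).neg.const_add 1).log (by show (1:ℝ)+ -id t ≠ 0; simp only [id]; nlinarith [ht.2])
          simpa [sub_eq_add_neg] using this
        exact (h1.sub h2).sub ((hasDerivAt_id t).const_mul 2 |>.congr_deriv (by ring))
      rw [hd.deriv]
      have hp : (0:ℝ) < 1 + t := by linarith
      have hm : (0:ℝ) < 1 - t := by linarith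
      rw [div_sub_div _ _ (ne_of_gt hp) (ne_of_gt hm)]
      have : (0:ℝ) < (1+t)*(1-t) := mul_pos hp hm
      have h2 : (2:ℝ) < (1*(1-t) - (1+t)*(-1))/((1+t)*(1-t)) := by
        rw [lt_div_iff₀ this]; nlinarith
      linarith
  have := key (Set.left_mem_Ico.mpr one_pos) (Set.mem_Ico.mpr ⟨le_of_lt h0, h1⟩) h0
  simp at this
  linarith



lemma Phi_mono (h m₁ m₂ : ℝ) (hh : 0 < h) (h1 : h < m₁) (h12 : m₁ < m₂) :
    Real.sqrt (m₁^2 - h^2) * (Real.log (m₁+h) - Real.log (m₁-h)) <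
    Real.sqrt (m₂^2 - h^2) * (Real.log (m₂+h) - Real.log (m₂-h)) := by
  have key : StrictMonoOn (fun m : ℝ => Real.sqrt (m^2 - h^2) * (Real.log (m+h) - Real.log (m-h)))
      (Set.Ioi h) := by
    apply strictMonoOn_of_deriv_pos (convex_Ioi h)
    · apply ContinuousOn.mul
      · exact (continuousOn_id.pow 2 |>.sub continuousOn_const).sqrt
      · apply ContinuousOn.sub
        · apply ContinuousOn.log (by fun_prop)
          intro t ht; simp only [Set.mem_Ioi] at ht; exact ne_of_gt (by linarith)
        · apply ContinuousOn.log (by fun_prop)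
          intro t ht; simp only [Set.mem_Ioi] at ht
          have : 0 < t - h := by linarith
          exact ne_of_gt this
    · intro m hm
      rw [interior_Ioi, Set.mem_Ioi] at hm
      have hm0 : 0 < m := lt_trans hh hm
      have hq : 0 < m^2 - h^2 := by nlinarith
      have hs : 0 < Real.sqrt (m^2 - h^2) := Real.sqrt_pos.mpr hq
      have hd : HasDerivAt (fun m : ℝ => Real.sqrt (m^2 - h^2) * (Real.log (m+h) - Real.log (m-h)))
          ((2*m) / (2 * Real.sqrt (m^2-h^2)) * (Real.log (m+h) - Real.log (m-h))
            + Real.sqrt (m^2-h^2) * (1/(m+h) - 1/(m-h))) m := by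
        have hsq : HasDerivAt (fun m : ℝ => Real.sqrt (m^2 - h^2)) ((2*m)/(2*Real.sqrt (m^2-h^2))) m := by
          have hin : HasDerivAt (fun m : ℝ => m^2 - h^2) (2*m) m := by
            simpa using ((hasDerivAt_pow 2 m).sub_const (h^2))
          exact hin.sqrt (ne_of_gt hq)
        have hl1 : HasDerivAt (fun m : ℝ => Real.log (m+h)) (1/(m+h)) m := by
          have := ((hasDerivAt_id m).add_const h).log (by show id m + h ≠ 0; simp only [id]; positivity)
          simpa using this
        have hl2 : HasDerivAt (fun m : ℝ => Real.log (m-h)) (1/(m-h)) m := by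
          have := ((hasDerivAt_id m).sub_const h).log (by show id m - h ≠ 0; simp only [id]; intro c; nlinarith)
          simpa using this
        exact hsq.mul (hl1.sub hl2)
      rw [hd.deriv]
      -- derivative equals (m*L - 2h)/sqrt
      have hL : 2*(h/m) < Real.log (m+h) - Real.log (m-h) := by
        have hr0 : 0 < h/m := div_pos hh hm0
        have hr1 : h/m < 1 := (div_lt_one hm0).mpr hm
        have := log_ratio_gt (h/m) hr0 hr1
        have e1 : Real.log (m+h) = Real.log m + Real.log (1 + h/m) := by
          rw [← Real.log_mul (ne_of_gt hm0) (by positivity)]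
          congr 1; field_simp
        have e2 : Real.log (m-h) = Real.log m + Real.log (1 - h/m) := by
          rw [← Real.log_mul (ne_of_gt hm0) (by intro c; rw [sub_eq_zero] at c; rw [← c] at hr1; simp at hr1)]
          congr 1; field_simp
        rw [e1, e2]; linarith
      have hL2 : 2*h < m * (Real.log (m+h) - Real.log (m-h)) := by
        calc 2*h = m * (2*(h/m)) := by field_simp
        _ < _ := mul_lt_mul_of_pos_left hL hm0
      have hsqsq : Real.sqrt (m^2-h^2) * Real.sqrt (m^2-h^2) = m^2 - h^2 :=
        Real.mul_self_sqrt (le_of_lt hq)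
      have hph : 0 < m + h := by linarith
      have hmh : 0 < m - h := by linarith
      have e3 : (2*m) / (2 * Real.sqrt (m^2-h^2)) = m / Real.sqrt (m^2-h^2) := by
        field_simp
      have e4 : Real.sqrt (m^2-h^2) * (1/(m+h) - 1/(m-h)) = -(2*h) / Real.sqrt (m^2-h^2) := by
        rw [div_sub_div _ _ (ne_of_gt hph) (ne_of_gt hmh)]
        rw [eq_div_iff (ne_of_gt hs)]
        have : (m+h)*(m-h) = m^2 - h^2 := by ring
        field_simp
        nlinarith [hsqsq]
      rw [e3, e4]
      rw [div_mul_eq_mul_div, div_add_div _ _ (ne_of_gt hs) (ne_of_gt hs)]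
      apply div_pos _ (by positivity)
      nlinarith [hL2, hs]
  exact key (Set.mem_Ioi.mpr h1) (Set.mem_Ioi.mpr (lt_trans h1 h12)) h12

lemma mem_neg_Ioo (x : ℝ) : (-x ∈ Set.Ioo (-1:ℝ) 1) ↔ x ∈ Set.Ioo (-1:ℝ) 1 := by
  simp only [Set.mem_Ioo]
  constructor <;> (intro h; constructor <;> linarith [h.1, h.2])

lemma G_neg (x y : ℝ) : G (-x) y = G x (-y) := by
  unfold G
  have hc : ((-x) ∈ Set.Ioo (-1:ℝ) 1 ∧ y ∈ Set.Ioo (-1:ℝ) 1) ↔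
      (x ∈ Set.Ioo (-1:ℝ) 1 ∧ (-y) ∈ Set.Ioo (-1:ℝ) 1) := by
    rw [mem_neg_Ioo, mem_neg_Ioo]
  by_cases hxy : x ∈ Set.Ioo (-1:ℝ) 1 ∧ (-y) ∈ Set.Ioo (-1:ℝ) 1
  · rw [if_pos (hc.mpr hxy), if_pos hxy,
      show (-x:ℝ)-y = -(x-(-y)) by ring, abs_neg]
    ring_nf
  · rw [if_neg (fun c => hxy (hc.mp c)), if_neg hxy]

lemma g_odd (x z : ℝ) : g x (-z) = - g x z := by
  unfold g
  by_cases hx : x ∈ Set.Ioo (-1:ℝ) 1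
  · simp only [if_pos hx, neg_neg]; ring
  · rw [if_neg hx, if_neg hx]; simp

lemma g_even (x z : ℝ) : g (-x) z = g x z := by
  unfold g
  by_cases hx : x ∈ Set.Ioo (-1:ℝ) 1
  · rw [if_pos ((mem_neg_Ioo x).mpr hx), if_pos hx, G_neg, G_neg, neg_neg]
    ring
  · rw [if_neg (fun c => hx ((mem_neg_Ioo x).mp c)), if_neg hx]

lemma G_pos {x y : ℝ} (hx : x ∈ Set.Ioo (-1:ℝ) 1) (hy : y ∈ Set.Ioo (-1:ℝ) 1)
    (hxy : x ≠ y) : 0 < G x y := by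
  obtain ⟨hx1, hx2⟩ := hx
  obtain ⟨hy1, hy2⟩ := hy
  rw [G, if_pos ⟨⟨hx1,hx2⟩,⟨hy1,hy2⟩⟩]
  have hs : 0 < Real.sqrt ((1 - x^2) * (1 - y^2)) :=
    Real.sqrt_pos.mpr (mul_pos (by nlinarith) (by nlinarith))
  have habs : 0 < |x - y| := abs_pos.mpr (sub_ne_zero.mpr hxy)
  have hxy1 : |x - y| < 1 - x*y := by
    rw [abs_lt]
    constructor <;> nlinarith
  apply mul_pos (by positivity)
  apply Real.log_pos
  rw [lt_div_iff₀ habs]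
  linarith

lemma conv_lem (m h u : ℝ) (hh : 0 < h) (hu : 0 < u) (hhm : h < m)
    (hrel : (m-h)*(m+h) = (u/2)^2) :
    Real.sqrt (m^2 - h^2) * (Real.log (m+h) - Real.log (m-h))
      = u * Real.log ((2*(m+h))/u) := by
  have h1 : 0 < m - h := by linarith
  have h2 : 0 < m + h := by linarith
  have hsq : m^2 - h^2 = (u/2)^2 := by nlinarith [hrel]
  rw [hsq, Real.sqrt_sq (by positivity)]
  have e3 : Real.log (m-h) = 2 * Real.log (u/2) - Real.log (m+h) := by
    have hl := Real.log_mul (ne_of_gt h1) (ne_of_gt h2)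
    rw [hrel, Real.log_pow] at hl
    push_cast at hl
    linarith
  have e4 : Real.log ((2*(m+h))/u) = Real.log (m+h) - Real.log (u/2) := by
    rw [show (2*(m+h))/u = (m+h)/(u/2) by field_simp,
      Real.log_div (ne_of_gt h2) (by positivity)]
  rw [e3, e4]; ring

lemma g_pos_aux {x z : ℝ} (hx0 : 0 ≤ x) (hx1 : x < 1) (hz0 : 0 < z) (hz1 : z < 1) :
    0 < g x z := by
  have hx : x ∈ Set.Ioo (-1:ℝ) 1 := ⟨by linarith, hx1⟩
  have hz : z ∈ Set.Ioo (-1:ℝ) 1 := ⟨by linarith, hz1⟩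
  have hnz : (-z) ∈ Set.Ioo (-1:ℝ) 1 := ⟨by linarith, by linarith⟩
  rw [g, if_pos hx]
  rcases lt_trichotomy x z with hlt | heq | hgt
  · have hA : 0 < G x z := G_pos hx hz (ne_of_lt hlt)
    have hB : 0 < G x (-z) := G_pos hx hnz (by intro c; rw [c] at hx0; linarith)
    have h1 : 0 < (z - x) * G x z := mul_pos (by linarith) hA
    have h2 : 0 < (z + x) * G x (-z) := mul_pos (by linarith) hB
    linarith
  · subst heq
    have hB : 0 < G x (-x) := G_pos hx hnz (by intro c; linarith)
    have : (x - x) * G x x = 0 := by ring_nf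
    nlinarith [hB]
  · -- z < x, so 0 < z < x < 1
    have hq1 : 0 < 1 - x^2 := by nlinarith
    have hq2 : 0 < 1 - z^2 := by nlinarith
    set s := Real.sqrt ((1 - x^2) * (1 - z^2)) with hs_def
    have hs2 : s^2 = (1 - x^2) * (1 - z^2) :=
      Real.sq_sqrt (le_of_lt (mul_pos hq1 hq2))
    have hs : 0 < s := Real.sqrt_pos.mpr (mul_pos hq1 hq2)
    have hxz : 0 < x*z := mul_pos (by linarith) hz0
    have hu : 0 < x - z := by linarith
    have hv : 0 < x + z := by linarith
    have hxz1 : x*z < 1 := by nlinarith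
    have hp : s < 1 - x*z := by nlinarith [hs2, hs, sq_nonneg (x-z)]
    -- Phi monotonicity
    have hmono := Phi_mono (s/2) ((1-x*z)/2) ((1+x*z)/2) (by positivity)
      (by linarith) (by linarith)
    have hc1 := conv_lem ((1-x*z)/2) (s/2) (x-z) (by positivity) hu (by linarith)
      (by linear_combination (-1/4 : ℝ) * hs2)
    have hc2 := conv_lem ((1+x*z)/2) (s/2) (x+z) (by positivity) hv (by nlinarith)
      (by linear_combination (-1/4 : ℝ) * hs2)
    rw [hc1, hc2] at hmono
    rw [show 2*((1-x*z)/2 + s/2) = 1 - x*z + s by ring,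
        show 2*((1+x*z)/2 + s/2) = 1 + x*z + s by ring] at hmono
    -- compute G values
    have hGA : G x z = (1/Real.pi) * Real.log ((1 - x*z + s)/(x-z)) := by
      rw [G, if_pos ⟨hx, hz⟩, abs_of_pos hu]
    have hGB : G x (-z) = (1/Real.pi) * Real.log ((1 + x*z + s)/(x+z)) := by
      rw [G, if_pos ⟨hx, hnz⟩]
      rw [show x - (-z) = x + z by ring, abs_of_pos hv,
        show 1 - x*(-z) = 1 + x*z by ring, show ((-z):ℝ)^2 = z^2 by ring]
    rw [hGA, hGB]
    have hπ := Real.pi_pos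
    have key : 0 < (x+z) * Real.log ((1+x*z+s)/(x+z)) - (x-z) * Real.log ((1-x*z+s)/(x-z)) := by
      linarith
    have expand : (z - x) * ((1/Real.pi) * Real.log ((1 - x*z + s)/(x-z)))
        + (z + x) * ((1/Real.pi) * Real.log ((1 + x*z + s)/(x+z)))
        = (1/Real.pi) * ((x+z) * Real.log ((1+x*z+s)/(x+z)) - (x-z) * Real.log ((1-x*z+s)/(x-z))) := by
      ring
    rw [expand]
    positivity

theorem stmt_5 :
    (∀ x z : ℝ, g x (-z) = - g x z) ∧
    (∀ x z : ℝ, g (-x) z = g x z) ∧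
    (∀ x ∈ Set.Ioo (-1:ℝ) 1, ∀ z ∈ Set.Ioo (0:ℝ) 1, 0 < g x z) ∧
    (∀ x ∈ Set.Ioo (-1:ℝ) 1, ∀ z ∈ Set.Ioo (-1:ℝ) 0, g x z < 0) := by
  have hpos : ∀ x ∈ Set.Ioo (-1:ℝ) 1, ∀ z ∈ Set.Ioo (0:ℝ) 1, 0 < g x z := by
    intro x hx z hz
    rcases le_or_gt 0 x with h|h
    · exact g_pos_aux h hx.2 hz.1 hz.2
    · rw [← g_even]
      exact g_pos_aux (by linarith) (by linarith [hx.1]) hz.1 hz.2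
  refine ⟨g_odd, g_even, hpos, ?_⟩
  intro x hx z hz
  have h2 : 0 < g x (-z) := hpos x hx (-z) ⟨by linarith [hz.2], by linarith [hz.1]⟩
  have h3 := g_odd x z
  linarith
end

section
/- For all x, z ∈ (-1,1) one has |g(x,z)| ≤ (1/π)·√(1-x²)·√(1-z²), and for all x, z ∈ (-1,1) with x ≠ z and x ≠ -z one has |∂g/∂x (x,z)| ≤ (1/(2π))·ln( 1 + 4·√(1-x²)·√(1-z²)/|z²-x²| ). -/
open Real

private lemma sq_le_imp' (s c : ℝ) (hs : 0 ≤ s) (hc : 0 ≤ c) (h : s^2 ≤ c^2) : s ≤ c :=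
  (pow_le_pow_iff_left₀ hs hc two_ne_zero).mp h

private lemma log_le_half' (r : ℝ) (hr : 1 ≤ r) : Real.log r ≤ (r - r⁻¹)/2 := by
  have h0 : (0:ℝ) < r := lt_of_lt_of_le one_pos hr
  have h1 : 0 ≤ Real.log r := Real.log_nonneg hr
  calc Real.log r ≤ Real.sinh (Real.log r) := Real.self_le_sinh_iff.mpr h1
    _ = (r - r⁻¹)/2 := Real.sinh_log h0

private lemma term_bound' (x z : ℝ) (hx : x ∈ Set.Ioo (-1:ℝ) 1) (hz : z ∈ Set.Ioo (-1:ℝ) 1) :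
    |x - z| * Real.log ((1 - x*z + Real.sqrt ((1 - x^2) * (1 - z^2))) / |x - z|)
      ≤ Real.sqrt ((1 - x^2) * (1 - z^2)) := by
  obtain ⟨hx1, hx2⟩ := hx
  obtain ⟨hz1, hz2⟩ := hz
  set b := Real.sqrt ((1 - x^2) * (1 - z^2)) with hbdef
  have hprodpos : (0:ℝ) < (1 - x^2) * (1 - z^2) :=
    mul_pos (by nlinarith) (by nlinarith)
  have hb : 0 < b := Real.sqrt_pos.mpr hprodpos
  have hb2 : b^2 = (1 - x^2) * (1 - z^2) := Real.sq_sqrt hprodpos.le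
  rcases eq_or_ne x z with h | h
  · simp [h, Real.log_zero]; positivity
  · set s := |x - z| with hsdef
    have hs : 0 < s := abs_pos.mpr (sub_ne_zero.mpr h)
    set a := 1 - x*z with hadef
    have ha : 0 < a := by nlinarith
    have hs2 : s^2 = a^2 - b^2 := by
      rw [hsdef, sq_abs, hadef, hb2]; ring
    have hsab : s ≤ a + b := by
      apply sq_le_imp' _ _ hs.le (by positivity)
      nlinarith
    have hr1 : 1 ≤ (a + b)/s := (le_div_iff₀ hs).mpr (by linarith)
    have hlog := log_le_half' _ hr1
    have hinv : ((a+b)/s)⁻¹ = s/(a+b) := by rw [inv_div]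
    have key : s * (((a+b)/s - ((a+b)/s)⁻¹)/2) = b := by
      rw [hinv]
      field_simp
      nlinarith [hs2]
    calc s * Real.log ((a + b)/s) ≤ s * (((a+b)/s - ((a+b)/s)⁻¹)/2) :=
          mul_le_mul_of_nonneg_left hlog hs.le
      _ = b := key

private lemma log_nonneg'' (x z : ℝ) (hx : x ∈ Set.Ioo (-1:ℝ) 1) (hz : z ∈ Set.Ioo (-1:ℝ) 1) :
    0 ≤ Real.log ((1 - x*z + Real.sqrt ((1 - x^2) * (1 - z^2))) / |x - z|) := by
  obtain ⟨hx1, hx2⟩ := hx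
  obtain ⟨hz1, hz2⟩ := hz
  rcases eq_or_ne x z with h | h
  · simp [h]
  · have hs : 0 < |x - z| := abs_pos.mpr (sub_ne_zero.mpr h)
    apply Real.log_nonneg
    rw [le_div_iff₀ hs]
    have hprodpos : (0:ℝ) < (1 - x^2) * (1 - z^2) :=
      mul_pos (by nlinarith) (by nlinarith)
    have hb : 0 < Real.sqrt ((1 - x^2) * (1 - z^2)) := Real.sqrt_pos.mpr hprodpos
    have hb2 : (Real.sqrt ((1 - x^2) * (1 - z^2)))^2 = (1 - x^2) * (1 - z^2) :=
      Real.sq_sqrt hprodpos.le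
    have ha : 0 < 1 - x*z := by nlinarith
    have h1 : |x - z|^2 = (1-x*z)^2 - (Real.sqrt ((1 - x^2) * (1 - z^2)))^2 := by
      rw [sq_abs, hb2]; ring
    have : |x - z| ≤ 1 - x*z + Real.sqrt ((1 - x^2) * (1 - z^2)) := by
      apply sq_le_imp' _ _ (abs_nonneg _) (by positivity)
      nlinarith
    linarith

private lemma cancel_lemma (x z b : ℝ) (hxz' : x - z ≠ 0) (hxpz' : x + z ≠ 0) (hb : 0 < b)
    (hb2 : b^2 = (1-x^2)*(1-z^2))
    (hN : (0:ℝ) < 1 - x*z + b) (hM : (0:ℝ) < 1 + x*z + b) :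
    (z - x) * ((1/Real.pi) * ((-z + (-(2*x)*(1-z^2))/(2*b))/(1 - x*z + b) - 1/(x - z)))
    + (z + x) * ((1/Real.pi) * ((z + (-(2*x)*(1-z^2))/(2*b))/(1 + x*z + b) - 1/(x + z))) = 0 := by
  have hpi : Real.pi ≠ 0 := Real.pi_ne_zero
  have hN' : 1 - z*x + b ≠ 0 := by nlinarith
  have hM' : 1 + z*x + b ≠ 0 := by nlinarith
  field_simp
  ring_nf
  linear_combination (2*x*z*(x^2-z^2)) * hb2

set_option maxHeartbeats 1000000 in
private lemma final_core (x z b : ℝ) (hx1 : -1 < x) (hx2 : x < 1) (hz1 : -1 < z) (hz2 : z < 1)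
    (hxz' : x - z ≠ 0) (hxpz' : x + z ≠ 0) (hb : 0 < b)
    (hb2 : b^2 = (1-x^2)*(1-z^2)) :
    |(Real.log (1 + x*z + b) - Real.log (x + z))
      - (Real.log (1 - x*z + b) - Real.log (x - z))|
      ≤ Real.log (1 + 4*b/|z^2 - x^2|) := by
  set p := |x - z| with hpdef
  set q := |x + z| with hqdef
  have hp : 0 < p := abs_pos.mpr hxz'
  have hq : 0 < q := abs_pos.mpr hxpz'
  set N := 1 - x*z + b with hNdef
  set M := 1 + x*z + b with hMdef
  have hN : 0 < N := by rw [hNdef]; nlinarith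
  have hM : 0 < M := by rw [hMdef]; nlinarith
  have hpq : |z^2 - x^2| = p * q := by
    rw [hpdef, hqdef, show z^2 - x^2 = -((x-z)*(x+z)) by ring, abs_neg, abs_mul]
  set K := 1 + 4*b/(p*q) with hKdef
  have hKpos : 0 < K := by positivity
  have hlogxz : Real.log (x - z) = Real.log p := (Real.log_abs (x - z)).symm
  have hlogxpz : Real.log (x + z) = Real.log q := (Real.log_abs (x + z)).symm
  have hp2 : p^2 = (1 - x*z - b) * N := by
    rw [hpdef, sq_abs, hNdef]; linear_combination hb2
  have hq2 : q^2 = (1 + x*z - b) * M := by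
    rw [hqdef, sq_abs, hMdef]; linear_combination hb2
  have hpq2 : p * q = |x^2 - z^2| := by
    rw [hpdef, hqdef, ← abs_mul, show (x-z)*(x+z) = x^2 - z^2 by ring]
  have hx2' : (0:ℝ) ≤ 1 - x^2 := by nlinarith
  have hz2' : (0:ℝ) ≤ 1 - z^2 := by nlinarith
  have hkey1 : z^2 ≤ x^2 → z^2*(1-x^2) ≤ b := by
    intro h
    apply sq_le_imp' _ _ (mul_nonneg (sq_nonneg z) hx2') hb.le
    have hA : (0:ℝ) ≤ (1-x^2)*((1-z^2)*(1-z^4)) :=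
      mul_nonneg hx2' (mul_nonneg hz2' (by nlinarith [sq_nonneg (z^2)]))
    have hB : (0:ℝ) ≤ (1-x^2)*(z^4*(x^2-z^2)) :=
      mul_nonneg hx2' (mul_nonneg (by positivity) (by linarith))
    have hid : (1-x^2)*(1-z^2) - (z^2*(1-x^2))^2
        = (1-x^2)*((1-z^2)*(1-z^4)) + (1-x^2)*(z^4*(x^2-z^2)) := by ring
    rw [hb2]
    linarith
  have hkey2 : x^2 ≤ z^2 → x^2*(1-z^2) ≤ b := by
    intro h
    apply sq_le_imp' _ _ (mul_nonneg (sq_nonneg x) hz2') hb.le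
    have hA : (0:ℝ) ≤ (1-z^2)*((1-x^2)*(1-x^4)) :=
      mul_nonneg hz2' (mul_nonneg hx2' (by nlinarith [sq_nonneg (x^2)]))
    have hB : (0:ℝ) ≤ (1-z^2)*(x^4*(z^2-x^2)) :=
      mul_nonneg hz2' (mul_nonneg (by positivity) (by linarith))
    have hid : (1-x^2)*(1-z^2) - (x^2*(1-z^2))^2
        = (1-z^2)*((1-x^2)*(1-x^4)) + (1-z^2)*(x^4*(z^2-x^2)) := by ring
    rw [hb2]
    linarith
  have expandA : (1 - x*z - b) * M = x^2 + z^2 - 2*x^2*z^2 - 2*(x*z)*b := by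
    rw [hMdef]; linear_combination -hb2
  have expandB : (1 + x*z - b) * N = x^2 + z^2 - 2*x^2*z^2 + 2*(x*z)*b := by
    rw [hNdef]; linear_combination -hb2
  have hbxz1 : (0:ℝ) ≤ b * (1 + x*z) := mul_nonneg hb.le (by nlinarith)
  have hbxz2 : (0:ℝ) ≤ b * (1 - x*z) := mul_nonneg hb.le (by nlinarith)
  have coreA : (1 - x*z - b) * M ≤ p*q + 4*b := by
    rw [hpq2, expandA]
    rcases le_total (z^2) (x^2) with h | h
    · rw [abs_of_nonneg (by linarith)]
      nlinarith [hkey1 h, hbxz1]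
    · rw [abs_of_nonpos (by linarith)]
      nlinarith [hkey2 h, hbxz1]
  have coreB : (1 + x*z - b) * N ≤ p*q + 4*b := by
    rw [hpq2, expandB]
    rcases le_total (z^2) (x^2) with h | h
    · rw [abs_of_nonneg (by linarith)]
      nlinarith [hkey1 h, hbxz2]
    · rw [abs_of_nonpos (by linarith)]
      nlinarith [hkey2 h, hbxz2]
  have claimA : Real.log M + Real.log p ≤ Real.log K + (Real.log N + Real.log q) := by
    have h3 : M * (p*p) ≤ (p*q + 4*b) * N := by
      calc M * (p*p) = ((1 - x*z - b) * M) * N := by rw [← sq, hp2]; ring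
        _ ≤ (p*q + 4*b) * N := mul_le_mul_of_nonneg_right coreA hN.le
    have h5 : K * (N*q) * p = (p*q + 4*b) * N := by
      rw [hKdef]; field_simp
    have h4 : M * p ≤ K * (N*q) := by
      apply le_of_mul_le_mul_right _ hp
      calc M * p * p = M * (p*p) := by ring
        _ ≤ (p*q + 4*b) * N := h3
        _ = K * (N*q) * p := h5.symm
    calc Real.log M + Real.log p = Real.log (M*p) := (Real.log_mul hM.ne' hp.ne').symm
      _ ≤ Real.log (K*(N*q)) := Real.log_le_log (by positivity) h4
      _ = Real.log K + (Real.log N + Real.log q) := by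
          rw [Real.log_mul hKpos.ne' (by positivity), Real.log_mul hN.ne' hq.ne']
  have claimB : Real.log N + Real.log q ≤ Real.log K + (Real.log M + Real.log p) := by
    have h3 : N * (q*q) ≤ (p*q + 4*b) * M := by
      calc N * (q*q) = ((1 + x*z - b) * N) * M := by rw [← sq, hq2]; ring
        _ ≤ (p*q + 4*b) * M := mul_le_mul_of_nonneg_right coreB hM.le
    have h5 : K * (M*p) * q = (p*q + 4*b) * M := by
      rw [hKdef]; field_simp
    have h4 : N * q ≤ K * (M*p) := by
      apply le_of_mul_le_mul_right _ hq
      calc N * q * q = N * (q*q) := by ring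
        _ ≤ (p*q + 4*b) * M := h3
        _ = K * (M*p) * q := h5.symm
    calc Real.log N + Real.log q = Real.log (N*q) := (Real.log_mul hN.ne' hq.ne').symm
      _ ≤ Real.log (K*(M*p)) := Real.log_le_log (by positivity) h4
      _ = Real.log K + (Real.log M + Real.log p) := by
          rw [Real.log_mul hKpos.ne' (by positivity), Real.log_mul hM.ne' hp.ne']
  rw [hpq, hlogxz, hlogxpz]
  rw [abs_le]
  constructor
  · linarith
  · linarith

private lemma Gval (x z : ℝ) (hx : x ∈ Set.Ioo (-1:ℝ) 1) (hz : z ∈ Set.Ioo (-1:ℝ) 1)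
    (hxz : x ≠ z) :
    G x z = (1/Real.pi) * (Real.log (1 - x*z + Real.sqrt ((1-x^2)*(1-z^2)))
      - Real.log (x - z)) := by
  obtain ⟨hx1, hx2⟩ := hx
  obtain ⟨hz1, hz2⟩ := hz
  have hb : 0 < Real.sqrt ((1-x^2)*(1-z^2)) :=
    Real.sqrt_pos.mpr (mul_pos (by nlinarith) (by nlinarith))
  have hA : (1 - x*z + Real.sqrt ((1-x^2)*(1-z^2))) ≠ 0 := by nlinarith
  have hs : x - z ≠ 0 := sub_ne_zero.mpr hxz
  have hsa : |x - z| ≠ 0 := abs_ne_zero.mpr hs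
  rw [G, if_pos ⟨⟨hx1,hx2⟩,⟨hz1,hz2⟩⟩, Real.log_div hA hsa, Real.log_abs]

private lemma gEventEq (x z : ℝ) (hx : x ∈ Set.Ioo (-1:ℝ) 1) (hz : z ∈ Set.Ioo (-1:ℝ) 1)
    (hxz : x ≠ z) (hxmz : x ≠ -z) :
    (fun t => g t z) =ᶠ[nhds x] (fun t =>
      (1/2) * ((z - t) * ((1/Real.pi) * (Real.log (1 - t*z + Real.sqrt ((1-t^2)*(1-z^2)))
          - Real.log (t - z)))
        + (z + t) * ((1/Real.pi) * (Real.log (1 + t*z + Real.sqrt ((1-t^2)*(1-z^2)))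
          - Real.log (t + z))))) := by
  have hmz : -z ∈ Set.Ioo (-1:ℝ) 1 := ⟨by linarith [hz.2], by linarith [hz.1]⟩
  have hopen : IsOpen (Set.Ioo (-1:ℝ) 1 ∩ ({z}ᶜ ∩ {-z}ᶜ)) :=
    isOpen_Ioo.inter ((isOpen_compl_singleton).inter isOpen_compl_singleton)
  have hmem : x ∈ Set.Ioo (-1:ℝ) 1 ∩ ({z}ᶜ ∩ {-z}ᶜ) := ⟨hx, hxz, hxmz⟩
  filter_upwards [hopen.mem_nhds hmem] with t ht
  obtain ⟨ht1, ht2, ht3⟩ := ht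
  have h1 : G t z = (1/Real.pi) * (Real.log (1 - t*z + Real.sqrt ((1-t^2)*(1-z^2)))
      - Real.log (t - z)) := Gval t z ht1 hz ht2
  have h2 : G t (-z) = (1/Real.pi) * (Real.log (1 + t*z + Real.sqrt ((1-t^2)*(1-z^2)))
      - Real.log (t + z)) := by
    have := Gval t (-z) ht1 hmz ht3
    rw [this, show (1:ℝ) - t * -z = 1 + t*z by ring, show (1:ℝ) - (-z)^2 = 1 - z^2 by ring,
      sub_neg_eq_add]
  rw [g, if_pos ht1, h1, h2]

private lemma hasDerivPhi (x z : ℝ) (hx : x ∈ Set.Ioo (-1:ℝ) 1) (hz : z ∈ Set.Ioo (-1:ℝ) 1)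
    (hxz : x ≠ z) (hxmz : x ≠ -z) :
    HasDerivAt (fun t =>
      (1/2) * ((z - t) * ((1/Real.pi) * (Real.log (1 - t*z + Real.sqrt ((1-t^2)*(1-z^2)))
          - Real.log (t - z)))
        + (z + t) * ((1/Real.pi) * (Real.log (1 + t*z + Real.sqrt ((1-t^2)*(1-z^2)))
          - Real.log (t + z)))))
      ((1/2) * (((-1) * ((1/Real.pi) * (Real.log (1 - x*z + Real.sqrt ((1-x^2)*(1-z^2)))
          - Real.log (x - z)))
        + (z - x) * ((1/Real.pi) * ((-z + (-(2*x)*(1-z^2))/(2*Real.sqrt ((1-x^2)*(1-z^2))))/(1 - x*z + Real.sqrt ((1-x^2)*(1-z^2))) - 1/(x - z))))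
       + ((1) * ((1/Real.pi) * (Real.log (1 + x*z + Real.sqrt ((1-x^2)*(1-z^2)))
          - Real.log (x + z)))
        + (z + x) * ((1/Real.pi) * ((z + (-(2*x)*(1-z^2))/(2*Real.sqrt ((1-x^2)*(1-z^2))))/(1 + x*z + Real.sqrt ((1-x^2)*(1-z^2))) - 1/(x + z)))))) x := by
  obtain ⟨hx1, hx2⟩ := hx
  obtain ⟨hz1, hz2⟩ := hz
  have hprod : (0:ℝ) < (1-x^2)*(1-z^2) := mul_pos (by nlinarith) (by nlinarith)
  have hb : 0 < Real.sqrt ((1-x^2)*(1-z^2)) := Real.sqrt_pos.mpr hprod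
  have hN : (0:ℝ) < 1 - x*z + Real.sqrt ((1-x^2)*(1-z^2)) := by nlinarith
  have hM : (0:ℝ) < 1 + x*z + Real.sqrt ((1-x^2)*(1-z^2)) := by nlinarith
  have hxz' : x - z ≠ 0 := sub_ne_zero.mpr hxz
  have hxpz' : x + z ≠ 0 := fun h => hxmz (eq_neg_of_add_eq_zero_left h)
  have hinner : HasDerivAt (fun t:ℝ => (1-t^2)*(1-z^2)) (-(2*x)*(1-z^2)) x := by
    have h1 : HasDerivAt (fun t:ℝ => 1-t^2) (-(2*x)) x := by
      simpa using (hasDerivAt_pow 2 x).const_sub 1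
    simpa using h1.mul_const (1-z^2)
  have hsqrt : HasDerivAt (fun t => Real.sqrt ((1-t^2)*(1-z^2)))
      ((-(2*x)*(1-z^2))/(2*Real.sqrt ((1-x^2)*(1-z^2)))) x := hinner.sqrt hprod.ne'
  have hNd : HasDerivAt (fun t => 1 - t*z + Real.sqrt ((1-t^2)*(1-z^2)))
      (-z + (-(2*x)*(1-z^2))/(2*Real.sqrt ((1-x^2)*(1-z^2)))) x := by
    have h2 : HasDerivAt (fun t:ℝ => 1 - t*z) (-z) x := by
      simpa using ((hasDerivAt_id x).mul_const z).const_sub 1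
    exact h2.add hsqrt
  have hMd : HasDerivAt (fun t => 1 + t*z + Real.sqrt ((1-t^2)*(1-z^2)))
      (z + (-(2*x)*(1-z^2))/(2*Real.sqrt ((1-x^2)*(1-z^2)))) x := by
    have h2 : HasDerivAt (fun t:ℝ => 1 + t*z) (z) x := by
      simpa using ((hasDerivAt_id x).mul_const z).const_add 1
    exact h2.add hsqrt
  have hlogN : HasDerivAt (fun t => Real.log (1 - t*z + Real.sqrt ((1-t^2)*(1-z^2))))
      ((-z + (-(2*x)*(1-z^2))/(2*Real.sqrt ((1-x^2)*(1-z^2))))/(1 - x*z + Real.sqrt ((1-x^2)*(1-z^2)))) x :=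
    hNd.log hN.ne'
  have hlogM : HasDerivAt (fun t => Real.log (1 + t*z + Real.sqrt ((1-t^2)*(1-z^2))))
      ((z + (-(2*x)*(1-z^2))/(2*Real.sqrt ((1-x^2)*(1-z^2))))/(1 + x*z + Real.sqrt ((1-x^2)*(1-z^2)))) x :=
    hMd.log hM.ne'
  have hlogtz : HasDerivAt (fun t:ℝ => Real.log (t - z)) (1/(x-z)) x := by
    have := ((hasDerivAt_id x).sub_const z).log hxz'
    simpa using this
  have hlogtpz : HasDerivAt (fun t:ℝ => Real.log (t + z)) (1/(x+z)) x := by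
    have := ((hasDerivAt_id x).add_const z).log hxpz'
    simpa using this
  have hP : HasDerivAt (fun t => (1/Real.pi) * (Real.log (1 - t*z + Real.sqrt ((1-t^2)*(1-z^2))) - Real.log (t - z)))
      ((1/Real.pi) * ((-z + (-(2*x)*(1-z^2))/(2*Real.sqrt ((1-x^2)*(1-z^2))))/(1 - x*z + Real.sqrt ((1-x^2)*(1-z^2))) - 1/(x - z))) x :=
    (hlogN.sub hlogtz).const_mul (1/Real.pi)
  have hQ : HasDerivAt (fun t => (1/Real.pi) * (Real.log (1 + t*z + Real.sqrt ((1-t^2)*(1-z^2))) - Real.log (t + z)))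
      ((1/Real.pi) * ((z + (-(2*x)*(1-z^2))/(2*Real.sqrt ((1-x^2)*(1-z^2))))/(1 + x*z + Real.sqrt ((1-x^2)*(1-z^2))) - 1/(x + z))) x :=
    (hlogM.sub hlogtpz).const_mul (1/Real.pi)
  have hzx : HasDerivAt (fun t:ℝ => z - t) (-1) x := by
    simpa using (hasDerivAt_id x).const_sub z
  have hzpx : HasDerivAt (fun t:ℝ => z + t) (1:ℝ) x := by
    simpa using (hasDerivAt_id x).const_add z
  exact ((hzx.mul hP).add (hzpx.mul hQ)).const_mul (1/2)

theorem stmt_6 :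
    (∀ x ∈ Set.Ioo (-1:ℝ) 1, ∀ z ∈ Set.Ioo (-1:ℝ) 1,
      |g x z| ≤ (1 / Real.pi) * Real.sqrt (1 - x^2) * Real.sqrt (1 - z^2)) ∧
    (∀ x ∈ Set.Ioo (-1:ℝ) 1, ∀ z ∈ Set.Ioo (-1:ℝ) 1, x ≠ z → x ≠ -z →
      |deriv (fun t => g t z) x| ≤
        (1 / (2 * Real.pi)) *
          Real.log (1 + 4 * Real.sqrt (1 - x^2) * Real.sqrt (1 - z^2) / |z^2 - x^2|)) := by
  constructor
  · intro x hx z hz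
    have hmz : -z ∈ Set.Ioo (-1:ℝ) 1 := ⟨by linarith [hz.2], by linarith [hz.1]⟩
    have hpi : (0:ℝ) < Real.pi := Real.pi_pos
    rw [g, if_pos hx, G, if_pos ⟨hx, hz⟩, G, if_pos ⟨hx, hmz⟩]
    set L1 := Real.log ((1 - x*z + Real.sqrt ((1 - x^2) * (1 - z^2))) / |x - z|) with hL1
    set L2 := Real.log ((1 - x*(-z) + Real.sqrt ((1 - x^2) * (1 - (-z)^2))) / |x - (-z)|) with hL2
    have hL1n : 0 ≤ L1 := log_nonneg'' x z hx hz
    have hL2n : 0 ≤ L2 := log_nonneg'' x (-z) hx hmz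
    have key1 : |z - x| * L1 ≤ Real.sqrt ((1 - x^2) * (1 - z^2)) := by
      rw [abs_sub_comm]; exact term_bound' x z hx hz
    have esq : Real.sqrt ((1 - x^2) * (1 - (-z)^2)) = Real.sqrt ((1 - x^2) * (1 - z^2)) := by
      norm_num
    have eabs : |z + x| = |x - -z| := by rw [sub_neg_eq_add, add_comm]
    have key2 : |z + x| * L2 ≤ Real.sqrt ((1 - x^2) * (1 - z^2)) := by
      rw [eabs, ← esq]
      exact term_bound' x (-z) hx hmz
    have habs1 : |(z - x) * ((1/Real.pi) * L1)| ≤ (1/Real.pi) * Real.sqrt ((1 - x^2) * (1 - z^2)) := by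
      rw [abs_mul, abs_of_nonneg (mul_nonneg (by positivity) hL1n)]
      calc |z - x| * ((1/Real.pi) * L1) = (1/Real.pi) * (|z - x| * L1) := by ring
        _ ≤ (1/Real.pi) * Real.sqrt ((1 - x^2) * (1 - z^2)) := by
            apply mul_le_mul_of_nonneg_left key1 (by positivity)
    have habs2 : |(z + x) * ((1/Real.pi) * L2)| ≤ (1/Real.pi) * Real.sqrt ((1 - x^2) * (1 - z^2)) := by
      rw [abs_mul, abs_of_nonneg (mul_nonneg (by positivity) hL2n)]
      calc |z + x| * ((1/Real.pi) * L2) = (1/Real.pi) * (|z + x| * L2) := by ring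
        _ ≤ (1/Real.pi) * Real.sqrt ((1 - x^2) * (1 - z^2)) := by
            apply mul_le_mul_of_nonneg_left key2 (by positivity)
    have hsq : Real.sqrt ((1 - x^2) * (1 - z^2)) = Real.sqrt (1 - x^2) * Real.sqrt (1 - z^2) :=
      Real.sqrt_mul (by nlinarith [hx.1, hx.2]) _
    calc |1/2 * ((z - x) * (1/Real.pi * L1) + (z + x) * (1/Real.pi * L2))|
        = 1/2 * |(z - x) * (1/Real.pi * L1) + (z + x) * (1/Real.pi * L2)| := by
          rw [abs_mul]; norm_num
      _ ≤ 1/2 * (|(z - x) * (1/Real.pi * L1)| + |(z + x) * (1/Real.pi * L2)|) := by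
          have := abs_add_le ((z - x) * (1/Real.pi * L1)) ((z + x) * (1/Real.pi * L2))
          linarith
      _ ≤ 1/2 * ((1/Real.pi) * Real.sqrt ((1 - x^2) * (1 - z^2)) + (1/Real.pi) * Real.sqrt ((1 - x^2) * (1 - z^2))) := by
          linarith
      _ = (1/Real.pi) * Real.sqrt (1 - x^2) * Real.sqrt (1 - z^2) := by rw [hsq]; ring
  · intro x hx z hz hxz hxmz
    obtain ⟨hx1, hx2⟩ := hx
    obtain ⟨hz1, hz2⟩ := hz
    have hpi : (0:ℝ) < Real.pi := Real.pi_pos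
    have hprod : (0:ℝ) < (1-x^2)*(1-z^2) := mul_pos (by nlinarith) (by nlinarith)
    set b := Real.sqrt ((1-x^2)*(1-z^2)) with hbdef
    have hb : 0 < b := Real.sqrt_pos.mpr hprod
    have hb2 : b^2 = (1-x^2)*(1-z^2) := Real.sq_sqrt hprod.le
    have hN : (0:ℝ) < 1 - x*z + b := by nlinarith
    have hM : (0:ℝ) < 1 + x*z + b := by nlinarith
    have hxz' : x - z ≠ 0 := sub_ne_zero.mpr hxz
    have hxpz' : x + z ≠ 0 := fun h => hxmz (eq_neg_of_add_eq_zero_left h)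
    have hD := hasDerivPhi x z ⟨hx1,hx2⟩ ⟨hz1,hz2⟩ hxz hxmz
    have hEv := gEventEq x z ⟨hx1,hx2⟩ ⟨hz1,hz2⟩ hxz hxmz
    have hg : HasDerivAt (fun t => g t z) _ x := hD.congr_of_eventuallyEq hEv
    rw [hg.deriv]
    have cancel := cancel_lemma x z b hxz' hxpz' hb hb2 hN hM
    have hDval : (1/2) * (((-1) * ((1/Real.pi) * (Real.log (1 - x*z + b)
          - Real.log (x - z)))
        + (z - x) * ((1/Real.pi) * ((-z + (-(2*x)*(1-z^2))/(2*b))/(1 - x*z + b) - 1/(x - z))))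
       + ((1) * ((1/Real.pi) * (Real.log (1 + x*z + b)
          - Real.log (x + z)))
        + (z + x) * ((1/Real.pi) * ((z + (-(2*x)*(1-z^2))/(2*b))/(1 + x*z + b) - 1/(x + z)))))
        = (1/(2*Real.pi)) * ((Real.log (1 + x*z + b) - Real.log (x + z))
            - (Real.log (1 - x*z + b) - Real.log (x - z))) := by
      linear_combination (1/2) * cancel
    rw [hDval]
    rw [abs_mul, abs_of_nonneg (show (0:ℝ) ≤ 1/(2*Real.pi) by positivity)]
    have hfc := final_core x z b hx1 hx2 hz1 hz2 hxz' hxpz' hb hb2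
    have hsq : 4 * Real.sqrt (1 - x^2) * Real.sqrt (1 - z^2) = 4*b := by
      rw [hbdef, Real.sqrt_mul (by nlinarith)]; ring
    rw [hsq]
    exact mul_le_mul_of_nonneg_left hfc (by positivity)
end
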